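/- arXiv:2109.13350 — 5 statements merged into one kernel-verified Lean document; each statement's English description precedes it below -/
import Mathlib

section
/- For a bounded linear operator T on a complex Banach space, σ_e(T) ⊆ σ_a(T) if and only if σ_bf(T) ⊆ σ_a(T). -/
open Filter Topology

variable {X : Type*} [NormedAddCommGroup X] [NormedSpace ℂ X] [CompleteSpace X]

/-- `S` is a Fredholm operator. -/
def IsFredholm (S : X →L[ℂ] X) : Prop :=
  FiniteDimensional ℂ (LinearMap.ker (S : X →ₗ[ℂ] X)) ∧
  IsClosed ((LinearMap.range (S : X →ₗ[ℂ] X) : Submodule ℂ X) : Set X) ∧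
  FiniteDimensional ℂ (X ⧸ LinearMap.range (S : X →ₗ[ℂ] X))

/-- `S` is a Weyl operator: Fredholm of index zero. -/
def IsWeyl (S : X →L[ℂ] X) : Prop :=
  IsFredholm S ∧
  Module.finrank ℂ (LinearMap.ker (S : X →ₗ[ℂ] X)) = Module.finrank ℂ (X ⧸ LinearMap.range (S : X →ₗ[ℂ] X))

/-- `S` is a B-Fredholm operator: for some `n`, `R(S^n)` is closed and the restriction
`S_[n] : R(S^n) → R(S^n)` is Fredholm (its kernel is `ker S ⊓ R(S^n)`, its range is
`R(S^(n+1))`). -/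
def IsBFredholm (S : X →L[ℂ] X) : Prop :=
  ∃ n : ℕ, IsClosed ((LinearMap.range ((S ^ n : X →L[ℂ] X) : X →ₗ[ℂ] X) : Submodule ℂ X) : Set X) ∧
    IsClosed ((LinearMap.range ((S ^ (n + 1) : X →L[ℂ] X) : X →ₗ[ℂ] X) : Submodule ℂ X) : Set X) ∧
    FiniteDimensional ℂ ↥(LinearMap.ker (S : X →ₗ[ℂ] X) ⊓ LinearMap.range ((S ^ n : X →L[ℂ] X) : X →ₗ[ℂ] X)) ∧
    FiniteDimensional ℂ (↥(LinearMap.range ((S ^ n : X →L[ℂ] X) : X →ₗ[ℂ] X)) ⧸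
      Submodule.comap (LinearMap.range ((S ^ n : X →L[ℂ] X) : X →ₗ[ℂ] X)).subtype (LinearMap.range ((S ^ (n + 1) : X →L[ℂ] X) : X →ₗ[ℂ] X)))

/-- `S` is a B-Weyl operator: B-Fredholm of index zero. -/
def IsBWeyl (S : X →L[ℂ] X) : Prop :=
  ∃ n : ℕ, IsClosed ((LinearMap.range ((S ^ n : X →L[ℂ] X) : X →ₗ[ℂ] X) : Submodule ℂ X) : Set X) ∧
    IsClosed ((LinearMap.range ((S ^ (n + 1) : X →L[ℂ] X) : X →ₗ[ℂ] X) : Submodule ℂ X) : Set X) ∧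
    FiniteDimensional ℂ ↥(LinearMap.ker (S : X →ₗ[ℂ] X) ⊓ LinearMap.range ((S ^ n : X →L[ℂ] X) : X →ₗ[ℂ] X)) ∧
    FiniteDimensional ℂ (↥(LinearMap.range ((S ^ n : X →L[ℂ] X) : X →ₗ[ℂ] X)) ⧸
      Submodule.comap (LinearMap.range ((S ^ n : X →L[ℂ] X) : X →ₗ[ℂ] X)).subtype (LinearMap.range ((S ^ (n + 1) : X →L[ℂ] X) : X →ₗ[ℂ] X))) ∧
    Module.finrank ℂ ↥(LinearMap.ker (S : X →ₗ[ℂ] X) ⊓ LinearMap.range ((S ^ n : X →L[ℂ] X) : X →ₗ[ℂ] X)) =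
      Module.finrank ℂ (↥(LinearMap.range ((S ^ n : X →L[ℂ] X) : X →ₗ[ℂ] X)) ⧸
        Submodule.comap (LinearMap.range ((S ^ n : X →L[ℂ] X) : X →ₗ[ℂ] X)).subtype (LinearMap.range ((S ^ (n + 1) : X →L[ℂ] X) : X →ₗ[ℂ] X)))

/-- `S` has finite ascent. -/
def HasFiniteAscent (S : X →L[ℂ] X) : Prop :=
  ∃ n : ℕ, LinearMap.ker ((S ^ n : X →L[ℂ] X) : X →ₗ[ℂ] X) = LinearMap.ker ((S ^ (n + 1) : X →L[ℂ] X) : X →ₗ[ℂ] X)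

/-- `S` has finite descent. -/
def HasFiniteDescent (S : X →L[ℂ] X) : Prop :=
  ∃ n : ℕ, LinearMap.range ((S ^ n : X →L[ℂ] X) : X →ₗ[ℂ] X) = LinearMap.range ((S ^ (n + 1) : X →L[ℂ] X) : X →ₗ[ℂ] X)

/-- The approximate point spectrum of `T`: points `λ` where `T - λ` is not bounded below. -/
def sigma_a (T : X →L[ℂ] X) : Set ℂ :=
  {l : ℂ | ¬ ∃ c > (0 : ℝ), ∀ x : X, c * ‖x‖ ≤ ‖(T - l • 1) x‖}

/-- The essential spectrum of `T`. -/
def sigma_e (T : X →L[ℂ] X) : Set ℂ := {l : ℂ | ¬ IsFredholm (T - l • 1)}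

/-- The Weyl spectrum of `T`. -/
def sigma_w (T : X →L[ℂ] X) : Set ℂ := {l : ℂ | ¬ IsWeyl (T - l • 1)}

/-- The B-Fredholm spectrum of `T`. -/
def sigma_bf (T : X →L[ℂ] X) : Set ℂ := {l : ℂ | ¬ IsBFredholm (T - l • 1)}

/-- The B-Weyl spectrum of `T`. -/
def sigma_bw (T : X →L[ℂ] X) : Set ℂ := {l : ℂ | ¬ IsBWeyl (T - l • 1)}

/-- The poles of the resolvent of `T`: spectral points with finite ascent and descent. -/
def poles (T : X →L[ℂ] X) : Set ℂ :=
  {l : ℂ | l ∈ spectrum ℂ T ∧ HasFiniteAscent (T - l • 1) ∧ HasFiniteDescent (T - l • 1)}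

/-- The poles of `T` of finite rank. -/
def poles0 (T : X →L[ℂ] X) : Set ℂ :=
  {l : ℂ | l ∈ poles T ∧ FiniteDimensional ℂ (LinearMap.ker ((T - l • 1 : X →L[ℂ] X) : X →ₗ[ℂ] X))}

/-- The left poles of `T`: points `λ ∈ σ_a(T)` with `p = p(T-λ) < ∞` and `R((T-λ)^(p+1))`
closed. -/
def leftPoles (T : X →L[ℂ] X) : Set ℂ :=
  {l : ℂ | l ∈ sigma_a T ∧ ∃ p : ℕ,
    LinearMap.ker (((T - l • 1) ^ p : X →L[ℂ] X) : X →ₗ[ℂ] X) = LinearMap.ker (((T - l • 1) ^ (p + 1) : X →L[ℂ] X) : X →ₗ[ℂ] X) ∧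
    (∀ m : ℕ, m < p → LinearMap.ker (((T - l • 1) ^ m : X →L[ℂ] X) : X →ₗ[ℂ] X) ≠ LinearMap.ker (((T - l • 1) ^ (m + 1) : X →L[ℂ] X) : X →ₗ[ℂ] X)) ∧
    IsClosed ((LinearMap.range (((T - l • 1) ^ (p + 1) : X →L[ℂ] X) : X →ₗ[ℂ] X) : Submodule ℂ X) : Set X)}

/-- The left poles of `T` of finite rank. -/
def leftPoles0 (T : X →L[ℂ] X) : Set ℂ :=
  {l : ℂ | l ∈ leftPoles T ∧ FiniteDimensional ℂ (LinearMap.ker ((T - l • 1 : X →L[ℂ] X) : X →ₗ[ℂ] X))}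

/-- The isolated points of a subset of `ℂ`. -/
def isoPts (A : Set ℂ) : Set ℂ := {l : ℂ | l ∈ A ∧ ¬ AccPt l (𝓟 A)}

/-- `E(T)`: isolated spectral points that are eigenvalues. -/
def Eset (T : X →L[ℂ] X) : Set ℂ :=
  {l : ℂ | l ∈ isoPts (spectrum ℂ T) ∧ LinearMap.ker ((T - l • 1 : X →L[ℂ] X) : X →ₗ[ℂ] X) ≠ ⊥}

/-- `E⁰(T)`: isolated spectral points that are eigenvalues of finite multiplicity. -/
def Eset0 (T : X →L[ℂ] X) : Set ℂ :=
  {l : ℂ | l ∈ isoPts (spectrum ℂ T) ∧ LinearMap.ker ((T - l • 1 : X →L[ℂ] X) : X →ₗ[ℂ] X) ≠ ⊥ ∧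
    FiniteDimensional ℂ (LinearMap.ker ((T - l • 1 : X →L[ℂ] X) : X →ₗ[ℂ] X))}

/-- `E_a(T)`: isolated points of the approximate point spectrum that are eigenvalues. -/
def Ea (T : X →L[ℂ] X) : Set ℂ :=
  {l : ℂ | l ∈ isoPts (sigma_a T) ∧ LinearMap.ker ((T - l • 1 : X →L[ℂ] X) : X →ₗ[ℂ] X) ≠ ⊥}

/-- `E_a⁰(T)`: isolated points of `σ_a(T)` that are eigenvalues of finite multiplicity. -/
def Ea0 (T : X →L[ℂ] X) : Set ℂ :=
  {l : ℂ | l ∈ isoPts (sigma_a T) ∧ LinearMap.ker ((T - l • 1 : X →L[ℂ] X) : X →ₗ[ℂ] X) ≠ ⊥ ∧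
    FiniteDimensional ℂ (LinearMap.ker ((T - l • 1 : X →L[ℂ] X) : X →ₗ[ℂ] X))}

noncomputable def quot_equiv (S : X →L[ℂ] X) (n : ℕ) (hn : Function.Injective (⇑(S ^ n))) :
    (X ⧸ LinearMap.range (S : X →ₗ[ℂ] X)) ≃ₗ[ℂ] (↥(LinearMap.range ((S ^ n : X →L[ℂ] X) : X →ₗ[ℂ] X)) ⧸
      Submodule.comap (LinearMap.range ((S ^ n : X →L[ℂ] X) : X →ₗ[ℂ] X)).subtype (LinearMap.range ((S ^ (n + 1) : X →L[ℂ] X) : X →ₗ[ℂ] X))) := by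
  let f : X →ₗ[ℂ] ↥(LinearMap.range ((S ^ n : X →L[ℂ] X) : X →ₗ[ℂ] X)) :=
    LinearMap.rangeRestrict ((S ^ n : X →L[ℂ] X) : X →ₗ[ℂ] X)
  have hfinj : Function.Injective f := fun a b hab => hn (congrArg Subtype.val hab)
  have hfsurj : Function.Surjective f := LinearMap.surjective_rangeRestrict _
  let e : X ≃ₗ[ℂ] ↥(LinearMap.range ((S ^ n : X →L[ℂ] X) : X →ₗ[ℂ] X)) := LinearEquiv.ofBijective f ⟨hfinj, hfsurj⟩
  have hmap : Submodule.map (e : X →ₗ[ℂ] ↥(LinearMap.range ((S ^ n : X →L[ℂ] X) : X →ₗ[ℂ] X))) (LinearMap.range (S : X →ₗ[ℂ] X))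
      = Submodule.comap (LinearMap.range ((S ^ n : X →L[ℂ] X) : X →ₗ[ℂ] X)).subtype (LinearMap.range ((S ^ (n + 1) : X →L[ℂ] X) : X →ₗ[ℂ] X)) := by
    ext z
    simp only [Submodule.mem_map, Submodule.mem_comap, LinearMap.mem_range,
      Submodule.coe_subtype]
    constructor
    · rintro ⟨y, ⟨w, rfl⟩, rfl⟩
      refine ⟨w, ?_⟩
      show (S ^ (n + 1)) w = ((S ^ n) (S w) : X)
      rw [pow_succ]; rfl
    · rintro ⟨w, hw⟩
      refine ⟨S w, ⟨w, rfl⟩, ?_⟩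
      apply Subtype.ext
      show ((S ^ n) (S w) : X) = (z : X)
      rw [← hw, pow_succ]; rfl
  exact Submodule.Quotient.equiv (LinearMap.range (S : X →ₗ[ℂ] X))
    (Submodule.comap (LinearMap.range ((S ^ n : X →L[ℂ] X) : X →ₗ[ℂ] X)).subtype (LinearMap.range ((S ^ (n + 1) : X →L[ℂ] X) : X →ₗ[ℂ] X))) e hmap

lemma isFredholm_isBFredholm (S : X →L[ℂ] X) (h : IsFredholm S) : IsBFredholm S := by
  obtain ⟨hk, hc, hq⟩ := h
  have h0 : LinearMap.range ((S ^ 0 : X →L[ℂ] X) : X →ₗ[ℂ] X) = (⊤ : Submodule ℂ X) := by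
    rw [pow_zero, LinearMap.range_eq_top]
    exact fun x => ⟨x, rfl⟩
  have h1 : S ^ (0 + 1) = S := by rw [zero_add, pow_one]
  refine ⟨0, ?_, ?_, ?_, ?_⟩
  · rw [h0]; simpa using isClosed_univ
  · rw [h1]; exact hc
  · rw [h0, inf_top_eq]; exact hk
  · have e := quot_equiv S 0 (by rw [pow_zero]; intro a b hab; simpa using hab)
    exact e.finiteDimensional

lemma boundedBelow_bf_fredholm (S : X →L[ℂ] X)
    (hb : ∃ c > (0 : ℝ), ∀ x : X, c * ‖x‖ ≤ ‖S x‖) (h : IsBFredholm S) : IsFredholm S := by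
  obtain ⟨c, hc, hineq⟩ := hb
  have hinj : Function.Injective S := by
    intro x y hxy
    have h1 : c * ‖x - y‖ ≤ ‖S (x - y)‖ := hineq _
    rw [map_sub, hxy, sub_self, norm_zero] at h1
    have h0 : ‖x - y‖ = 0 := by nlinarith [norm_nonneg (x - y)]
    exact sub_eq_zero.mp (norm_eq_zero.mp h0)
  have hker : LinearMap.ker (S : X →ₗ[ℂ] X) = ⊥ := LinearMap.ker_eq_bot.mpr hinj
  have hclosed : IsClosed ((LinearMap.range (S : X →ₗ[ℂ] X) : Submodule ℂ X) : Set X) := by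
    have hanti : AntilipschitzWith (⟨c, hc.le⟩ : NNReal)⁻¹ S := by
      apply S.antilipschitz_of_bound
      intro x
      have hcoe : (((⟨c, hc.le⟩ : NNReal)⁻¹ : NNReal) : ℝ) = c⁻¹ := by
        rfl
      rw [hcoe, le_inv_mul_iff₀ hc]
      exact hineq x
    have := hanti.isClosed_range S.uniformContinuous
    simpa [LinearMap.coe_range] using this
  obtain ⟨n, hcn, hcn1, hkfin, hqfin⟩ := h
  refine ⟨?_, hclosed, ?_⟩
  · rw [hker]; infer_instance
  · have hinjn : ∀ m : ℕ, Function.Injective (⇑(S ^ m)) := by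
      intro m
      induction m with
      | zero =>
        rw [pow_zero]
        intro a b hab
        simpa using hab
      | succ k ih =>
        rw [pow_succ]
        intro a b hab
        simp only [ContinuousLinearMap.mul_apply] at hab
        exact hinj (ih hab)
    exact ((quot_equiv S n (hinjn n)).symm.finiteDimensional : _)

/-- `σ_e(T) ⊆ σ_a(T)` iff `σ_bf(T) ⊆ σ_a(T)`. -/
theorem stmt3 (T : X →L[ℂ] X) :
    sigma_e T ⊆ sigma_a T ↔ sigma_bf T ⊆ sigma_a T := by
  constructor
  · intro h l hl
    apply h
    intro hf
    exact hl (isFredholm_isBFredholm _ hf)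
  · intro h l hl
    by_contra ha
    have hbf : IsBFredholm (T - l • 1) := by
      by_contra hbf
      exact ha (h hbf)
    obtain ⟨c, hc, hineq⟩ := not_not.mp (by simpa [sigma_a] using ha)
    exact hl (boundedBelow_bf_fredholm _ ⟨c, hc, hineq⟩ hbf)
end

section
/- For a bounded linear operator T on a complex Banach space, if Π_a(T) ⊆ σ(T)\σ_bf(T), then Π_a^0(T) ⊆ σ(T)\σ_e(T). -/
open Filter Topology

variable {X : Type*} [NormedAddCommGroup X] [NormedSpace ℂ X] [CompleteSpace X]

/-- Extension lemma: finite-dimensional kernel and range imply finite-dimensional domain. -/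
lemma aux_fd_of_ker_range {K V W : Type*} [DivisionRing K] [AddCommGroup V] [Module K V]
    [AddCommGroup W] [Module K W] (f : V →ₗ[K] W) (h1 : FiniteDimensional K (LinearMap.ker f))
    (h2 : FiniteDimensional K (LinearMap.range f)) : FiniteDimensional K V := by
  have hq : FiniteDimensional K (V ⧸ LinearMap.ker f) :=
    f.quotKerEquivRange.symm.finiteDimensional
  exact IsNoetherian.iff_fg.1 <| (isNoetherian_iff_submodule_quotient (LinearMap.ker f)).2
    ⟨IsNoetherian.iff_fg.2 h1, IsNoetherian.iff_fg.2 hq⟩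

lemma aux_fd_ker_pow (S : X →L[ℂ] X) (hk : FiniteDimensional ℂ (LinearMap.ker (S : X →ₗ[ℂ] X))) :
    ∀ k : ℕ, FiniteDimensional ℂ (LinearMap.ker ((S ^ k : X →L[ℂ] X) : X →ₗ[ℂ] X)) := by
  intro k
  induction k with
  | zero =>
      have h0 : LinearMap.ker ((S ^ 0 : X →L[ℂ] X) : X →ₗ[ℂ] X) = ⊥ := by
        ext x; simp [pow_zero, ContinuousLinearMap.one_apply]
      rw [h0]; infer_instance
  | succ k ih =>
      set p := LinearMap.ker ((S ^ (k + 1) : X →L[ℂ] X) : X →ₗ[ℂ] X) with hp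
      have hmem : ∀ x ∈ p, S x ∈ LinearMap.ker ((S ^ k : X →L[ℂ] X) : X →ₗ[ℂ] X) := by
        intro x hx
        have hx' : (S ^ (k + 1)) x = 0 := hx
        have : (S ^ k) (S x) = (S ^ (k + 1)) x := by
          rw [pow_succ]; rfl
        simp [LinearMap.mem_ker, this, hx', -ContinuousLinearMap.toLinearMap_pow]
      let g : p →ₗ[ℂ] X := (S : X →ₗ[ℂ] X) ∘ₗ p.subtype
      apply aux_fd_of_ker_range g
      · have hker : LinearMap.ker g = Submodule.comap p.subtype (LinearMap.ker (S : X →ₗ[ℂ] X)) := by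
          ext x; rfl
        rw [hker]
        have hle : LinearMap.ker (S : X →ₗ[ℂ] X) ≤ p := by
          intro x hx
          have hx' : S x = 0 := hx
          have : (S ^ (k + 1)) x = (S ^ k) (S x) := by rw [pow_succ]; rfl
          simp [hp, LinearMap.mem_ker, this, hx', -ContinuousLinearMap.toLinearMap_pow]
        haveI := hk
        exact (Submodule.comapSubtypeEquivOfLe hle).symm.finiteDimensional
      · have hle : LinearMap.range g ≤ LinearMap.ker ((S ^ k : X →L[ℂ] X) : X →ₗ[ℂ] X) := by
          rintro _ ⟨⟨x, hx⟩, rfl⟩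
          exact hmem x hx
        exact Submodule.finiteDimensional_of_le hle

lemma aux_fd_coker (S : X →L[ℂ] X) (n : ℕ)
    (hk : FiniteDimensional ℂ (LinearMap.ker (S : X →ₗ[ℂ] X)))
    (hq : FiniteDimensional ℂ (↥(LinearMap.range ((S ^ n : X →L[ℂ] X) : X →ₗ[ℂ] X)) ⧸
      Submodule.comap (LinearMap.range ((S ^ n : X →L[ℂ] X) : X →ₗ[ℂ] X)).subtype (LinearMap.range ((S ^ (n + 1) : X →L[ℂ] X) : X →ₗ[ℂ] X)))) :
    FiniteDimensional ℂ (X ⧸ LinearMap.range (S : X →ₗ[ℂ] X)) := by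
  set A := LinearMap.range ((S ^ n : X →L[ℂ] X) : X →ₗ[ℂ] X) with hA
  set N := Submodule.comap A.subtype (LinearMap.range ((S ^ (n + 1) : X →L[ℂ] X) : X →ₗ[ℂ] X)) with hN
  let ψ : X →ₗ[ℂ] (↥A ⧸ N) :=
    N.mkQ ∘ₗ LinearMap.codRestrict A ((S ^ n : X →L[ℂ] X) : X →ₗ[ℂ] X)
      (fun x => LinearMap.mem_range_self _ x)
  have hmemker : ∀ x : X, x ∈ LinearMap.ker ψ ↔ (S ^ n) x ∈ LinearMap.range ((S ^ (n + 1) : X →L[ℂ] X) : X →ₗ[ℂ] X) := by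
    intro x
    simp only [ψ, LinearMap.mem_ker, LinearMap.comp_apply, Submodule.mkQ_apply,
      Submodule.Quotient.mk_eq_zero]
    rfl
  -- X ⧸ ker ψ is finite dimensional
  have hfdq : FiniteDimensional ℂ (X ⧸ LinearMap.ker ψ) :=
    ψ.quotKerEquivRange.symm.finiteDimensional
  -- ker ψ ≤ range S ⊔ ker (S^n)
  have hsub2 : LinearMap.ker ψ ≤ LinearMap.range (S : X →ₗ[ℂ] X) ⊔ LinearMap.ker ((S ^ n : X →L[ℂ] X) : X →ₗ[ℂ] X) := by
    intro x hx
    obtain ⟨y, hy⟩ := (hmemker x).1 hx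
    have hy' : (S ^ n) x = (S ^ n) (S y) := by
      rw [← hy, pow_succ]; rfl
    refine Submodule.mem_sup.2 ⟨S y, ⟨y, rfl⟩, x - S y, ?_, by abel⟩
    simp [LinearMap.mem_ker, map_sub, hy', -ContinuousLinearMap.toLinearMap_pow]
  -- range S ≤ ker ψ
  have hsub1 : LinearMap.range (S : X →ₗ[ℂ] X) ≤ LinearMap.ker ψ := by
    rintro _ ⟨y, rfl⟩
    refine (hmemker _).2 ⟨y, ?_⟩
    rw [pow_succ]; rfl
  -- the induced map on quotients
  let f2 : (X ⧸ LinearMap.range (S : X →ₗ[ℂ] X)) →ₗ[ℂ] (X ⧸ LinearMap.ker ψ) :=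
    Submodule.mapQ (LinearMap.range (S : X →ₗ[ℂ] X)) (LinearMap.ker ψ) LinearMap.id (by simpa using hsub1)
  apply aux_fd_of_ker_range f2
  · -- kernel of f2 is finite dimensional
    have hle : LinearMap.ker f2 ≤
        Submodule.map (LinearMap.range (S : X →ₗ[ℂ] X)).mkQ (LinearMap.ker ((S ^ n : X →L[ℂ] X) : X →ₗ[ℂ] X)) := by
      intro z hz
      obtain ⟨x, rfl⟩ := Submodule.mkQ_surjective _ z
      have hx : x ∈ LinearMap.ker ψ := by
        have := hz
        simp only [f2, LinearMap.mem_ker, Submodule.mapQ_apply, LinearMap.id_apply,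
          Submodule.mkQ_apply, Submodule.Quotient.mk_eq_zero] at this ⊢
        exact this
      obtain ⟨r, hr, k, hk', hrk⟩ := Submodule.mem_sup.1 (hsub2 hx)
      refine ⟨k, hk', ?_⟩
      simp only [Submodule.mkQ_apply]
      rw [Submodule.Quotient.eq]
      rw [← hrk]
      simpa using hr
    haveI : FiniteDimensional ℂ (LinearMap.ker ((S ^ n : X →L[ℂ] X) : X →ₗ[ℂ] X)) := aux_fd_ker_pow S hk n
    haveI : FiniteDimensional ℂ
        (Submodule.map (LinearMap.range (S : X →ₗ[ℂ] X)).mkQ (LinearMap.ker ((S ^ n : X →L[ℂ] X) : X →ₗ[ℂ] X))) := by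
      have heq : Submodule.map (LinearMap.range (S : X →ₗ[ℂ] X)).mkQ (LinearMap.ker ((S ^ n : X →L[ℂ] X) : X →ₗ[ℂ] X)) =
          LinearMap.range ((LinearMap.range (S : X →ₗ[ℂ] X)).mkQ ∘ₗ (LinearMap.ker ((S ^ n : X →L[ℂ] X) : X →ₗ[ℂ] X)).subtype) := by
        rw [LinearMap.range_comp, Submodule.range_subtype]
      rw [heq]; infer_instance
    exact Submodule.finiteDimensional_of_le hle
  · infer_instance

lemma aux_isClosed_range (S : X →L[ℂ] X)
    (hfd : FiniteDimensional ℂ (X ⧸ LinearMap.range (S : X →ₗ[ℂ] X))) :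
    IsClosed ((LinearMap.range (S : X →ₗ[ℂ] X) : Submodule ℂ X) : Set X) := by
  haveI : IsClosed ((LinearMap.ker (S : X →ₗ[ℂ] X) : Submodule ℂ X) : Set X) :=
    ContinuousLinearMap.isClosed_ker S
  let f : X ⧸ LinearMap.ker (S : X →ₗ[ℂ] X) →ₗ[ℂ] X := (LinearMap.ker (S : X →ₗ[ℂ] X)).liftQ (S : X →ₗ[ℂ] X) le_rfl
  have hcont : Continuous f := by
    rw [(Submodule.isQuotientMap_mkQ (LinearMap.ker (S : X →ₗ[ℂ] X))).continuous_iff]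
    exact S.continuous
  let F : (X ⧸ LinearMap.ker (S : X →ₗ[ℂ] X)) →L[ℂ] X := ⟨f, hcont⟩
  have hrange : LinearMap.range (F : X ⧸ LinearMap.ker (S : X →ₗ[ℂ] X) →ₗ[ℂ] X) = LinearMap.range (S : X →ₗ[ℂ] X) := by
    show LinearMap.range f = _
    rw [Submodule.range_liftQ]
  have hker : LinearMap.ker (F : X ⧸ LinearMap.ker (S : X →ₗ[ℂ] X) →ₗ[ℂ] X) = ⊥ := Submodule.ker_liftQ_eq_bot _ _ _ le_rfl
  obtain ⟨G, hG⟩ := Submodule.exists_isCompl (LinearMap.range (S : X →ₗ[ℂ] X))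
  haveI : FiniteDimensional ℂ G :=
    ((LinearMap.range (S : X →ₗ[ℂ] X)).quotientEquivOfIsCompl G hG).finiteDimensional
  have hGc : IsClosed (G : Set X) := G.closed_of_finiteDimensional
  have := F.closed_complemented_range_of_isCompl_of_ker_eq_bot G (hrange ▸ hG) hGc hker
  rwa [hrange] at this

/-- If `Π_a(T) ⊆ σ(T)\σ_bf(T)` then `Π_a⁰(T) ⊆ σ(T)\σ_e(T)`. -/
theorem stmt4 (T : X →L[ℂ] X) (h : leftPoles T ⊆ spectrum ℂ T \ sigma_bf T) :
    leftPoles0 T ⊆ spectrum ℂ T \ sigma_e T := by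
  rintro l ⟨hlp, hker⟩
  obtain ⟨hspec, hnbf⟩ := h hlp
  have hbf : IsBFredholm (T - l • 1) := by simpa [sigma_bf] using hnbf
  obtain ⟨n, -, -, -, hq⟩ := hbf
  have hfd : FiniteDimensional ℂ (X ⧸ LinearMap.range ((T - l • 1 : X →L[ℂ] X) : X →ₗ[ℂ] X)) :=
    aux_fd_coker (T - l • 1) n hker hq
  refine ⟨hspec, ?_⟩
  simp only [sigma_e, Set.mem_setOf_eq, not_not]
  exact ⟨hker, aux_isClosed_range _ hfd, hfd⟩
end

section
/- For a bounded linear operator T on a complex Banach space, if Π_a(T) ⊆ σ(T)\σ_bw(T), then Π_a^0(T) = Π^0(T). -/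
open Filter Topology

variable {X : Type*} [NormedAddCommGroup X] [NormedSpace ℂ X] [CompleteSpace X]

section Stmt5Aux

open Module Submodule

variable {X : Type*} [NormedAddCommGroup X] [NormedSpace ℂ X] [CompleteSpace X]

namespace Stmt5Aux

lemma pow_apply_succ (S : X →L[ℂ] X) (m : ℕ) (x : X) :
    (S ^ (m + 1)) x = (S ^ m) (S x) := by rw [pow_succ]; rfl

lemma pow_apply_succ' (S : X →L[ℂ] X) (m : ℕ) (x : X) :
    (S ^ (m + 1)) x = S ((S ^ m) x) := by rw [pow_succ']; rfl

lemma range_pow_succ_le (S : X →L[ℂ] X) (m : ℕ) :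
    LinearMap.range ((S ^ (m + 1) : X →L[ℂ] X) : X →ₗ[ℂ] X) ≤ LinearMap.range ((S ^ m : X →L[ℂ] X) : X →ₗ[ℂ] X) := by
  rintro x ⟨y, rfl⟩
  exact ⟨S y, (pow_apply_succ S m y).symm⟩

lemma range_pow_le (S : X →L[ℂ] X) {m k : ℕ} (h : m ≤ k) :
    LinearMap.range ((S ^ k : X →L[ℂ] X) : X →ₗ[ℂ] X) ≤ LinearMap.range ((S ^ m : X →L[ℂ] X) : X →ₗ[ℂ] X) := by
  induction k, h using Nat.le_induction with
  | base => exact le_rfl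
  | succ k hk ih => exact (range_pow_succ_le S k).trans ih

lemma ker_pow_le_succ (S : X →L[ℂ] X) (m : ℕ) :
    LinearMap.ker ((S ^ m : X →L[ℂ] X) : X →ₗ[ℂ] X) ≤ LinearMap.ker ((S ^ (m + 1) : X →L[ℂ] X) : X →ₗ[ℂ] X) := by
  intro x hx
  rw [LinearMap.mem_ker, ContinuousLinearMap.coe_coe] at hx ⊢
  rw [pow_apply_succ', hx, map_zero]

lemma ker_stab (S : X →L[ℂ] X) {p : ℕ}
    (hp : LinearMap.ker ((S ^ p : X →L[ℂ] X) : X →ₗ[ℂ] X) = LinearMap.ker ((S ^ (p + 1) : X →L[ℂ] X) : X →ₗ[ℂ] X)) {m : ℕ} (h : p ≤ m) :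
    LinearMap.ker ((S ^ m : X →L[ℂ] X) : X →ₗ[ℂ] X) = LinearMap.ker ((S ^ (m + 1) : X →L[ℂ] X) : X →ₗ[ℂ] X) := by
  induction m, h using Nat.le_induction with
  | base => exact hp
  | succ m hm ih =>
    refine le_antisymm (ker_pow_le_succ S (m + 1)) ?_
    intro x hx
    rw [LinearMap.mem_ker, ContinuousLinearMap.coe_coe] at hx ⊢
    rw [pow_apply_succ] at hx ⊢
    have : S x ∈ LinearMap.ker ((S ^ (m + 1) : X →L[ℂ] X) : X →ₗ[ℂ] X) := hx
    rw [← ih] at this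
    exact this

lemma range_stab (S : X →L[ℂ] X) {q : ℕ}
    (hq : LinearMap.range ((S ^ q : X →L[ℂ] X) : X →ₗ[ℂ] X) = LinearMap.range ((S ^ (q + 1) : X →L[ℂ] X) : X →ₗ[ℂ] X)) {m : ℕ} (h : q ≤ m) :
    LinearMap.range ((S ^ m : X →L[ℂ] X) : X →ₗ[ℂ] X) = LinearMap.range ((S ^ (m + 1) : X →L[ℂ] X) : X →ₗ[ℂ] X) := by
  induction m, h using Nat.le_induction with
  | base => exact hq
  | succ m hm ih =>
    refine le_antisymm ?_ (range_pow_succ_le S (m + 1))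
    rintro _ ⟨w, rfl⟩
    have h1 : (S ^ m) w ∈ LinearMap.range ((S ^ (m + 1) : X →L[ℂ] X) : X →ₗ[ℂ] X) := ih ▸ ⟨w, rfl⟩
    obtain ⟨u, hu⟩ := h1
    refine ⟨u, ?_⟩
    simp only [ContinuousLinearMap.coe_coe] at hu ⊢; rw [pow_apply_succ' S (m + 1), hu, ← pow_apply_succ']

lemma range_stab_of_le (S : X →L[ℂ] X) {q : ℕ}
    (hq : LinearMap.range ((S ^ q : X →L[ℂ] X) : X →ₗ[ℂ] X) = LinearMap.range ((S ^ (q + 1) : X →L[ℂ] X) : X →ₗ[ℂ] X)) {m M : ℕ} (h : q ≤ m)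
    (h2 : m ≤ M) : LinearMap.range ((S ^ m : X →L[ℂ] X) : X →ₗ[ℂ] X) = LinearMap.range ((S ^ M : X →L[ℂ] X) : X →ₗ[ℂ] X) := by
  induction M, h2 using Nat.le_induction with
  | base => rfl
  | succ M hM ih => exact ih.trans (range_stab S hq (h.trans hM))

lemma ker_inf_range_bot (S : X →L[ℂ] X) {p : ℕ}
    (hp : LinearMap.ker ((S ^ p : X →L[ℂ] X) : X →ₗ[ℂ] X) = LinearMap.ker ((S ^ (p + 1) : X →L[ℂ] X) : X →ₗ[ℂ] X)) {m : ℕ} (hm : p ≤ m) :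
    LinearMap.ker ((S : X →L[ℂ] X) : X →ₗ[ℂ] X) ⊓ LinearMap.range ((S ^ m : X →L[ℂ] X) : X →ₗ[ℂ] X) = ⊥ := by
  rw [eq_bot_iff]
  rintro x ⟨hxk, y, rfl⟩
  have hy : y ∈ LinearMap.ker ((S ^ (m + 1) : X →L[ℂ] X) : X →ₗ[ℂ] X) := by
    rw [LinearMap.mem_ker, ContinuousLinearMap.coe_coe, pow_apply_succ']
    exact hxk
  rw [← ker_stab S hp hm, LinearMap.mem_ker] at hy
  exact (Submodule.mem_bot ℂ).2 hy

lemma fd_ext {V : Type*} [AddCommGroup V] [Module ℂ V] (p : Submodule ℂ V)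
    (h1 : FiniteDimensional ℂ p) (h2 : FiniteDimensional ℂ (V ⧸ p)) :
    FiniteDimensional ℂ V := by
  obtain ⟨q, hq⟩ := p.exists_isCompl
  haveI := h1; haveI := h2
  haveI : FiniteDimensional ℂ q := (Submodule.quotientEquivOfIsCompl p q hq).finiteDimensional
  have hfd : FiniteDimensional ℂ ↥(p ⊔ q) := inferInstance
  rw [hq.codisjoint.eq_top] at hfd
  exact Submodule.topEquiv.finiteDimensional

lemma fd_dom {V W : Type*} [AddCommGroup V] [Module ℂ V] [AddCommGroup W] [Module ℂ W]
    (f : V →ₗ[ℂ] W) (hker : FiniteDimensional ℂ (LinearMap.ker f))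
    (hran : FiniteDimensional ℂ (LinearMap.range f)) : FiniteDimensional ℂ V := by
  haveI := hker; haveI := hran
  haveI : FiniteDimensional ℂ (V ⧸ LinearMap.ker f) :=
    f.quotKerEquivRange.symm.finiteDimensional
  exact fd_ext (LinearMap.ker f) hker this

lemma fd_ker_pow (S : X →L[ℂ] X) (h : FiniteDimensional ℂ (LinearMap.ker ((S : X →L[ℂ] X) : X →ₗ[ℂ] X))) (m : ℕ) :
    FiniteDimensional ℂ (LinearMap.ker ((S ^ m : X →L[ℂ] X) : X →ₗ[ℂ] X)) := by
  induction m with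
  | zero =>
    have hbot : LinearMap.ker ((S ^ 0 : X →L[ℂ] X) : X →ₗ[ℂ] X) = ⊥ := by
      rw [pow_zero]
      ext x
      simp [LinearMap.mem_ker, ContinuousLinearMap.one_apply]
    rw [hbot]
    infer_instance
  | succ m ih =>
    set D := LinearMap.ker ((S ^ (m + 1) : X →L[ℂ] X) : X →ₗ[ℂ] X) with hD
    let g : ↥D →ₗ[ℂ] X := ((S ^ m : X →L[ℂ] X) : X →ₗ[ℂ] X).comp D.subtype
    apply fd_dom g
    · have hkg : LinearMap.ker g = Submodule.comap D.subtype (LinearMap.ker ((S ^ m : X →L[ℂ] X) : X →ₗ[ℂ] X)) := by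
        ext x
        simp [g, LinearMap.mem_ker, Submodule.mem_comap]
      rw [hkg]
      haveI := ih
      exact (Submodule.comapSubtypeEquivOfLe (ker_pow_le_succ S m)).symm.finiteDimensional
    · have hle : LinearMap.range g ≤ LinearMap.ker ((S : X →L[ℂ] X) : X →ₗ[ℂ] X) := by
        rintro _ ⟨x, rfl⟩
        rw [LinearMap.mem_ker]
        show S ((S ^ m) (x : X)) = 0
        rw [← pow_apply_succ']
        exact LinearMap.mem_ker.mp x.2
      haveI := h
      exact Submodule.finiteDimensional_of_le hle

lemma top_eq_ker_sup_range (S : X →L[ℂ] X) {d N : ℕ}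
    (hd : LinearMap.range ((S ^ d : X →L[ℂ] X) : X →ₗ[ℂ] X) = LinearMap.range ((S ^ (d + 1) : X →L[ℂ] X) : X →ₗ[ℂ] X)) (hN : d ≤ N) :
    LinearMap.ker ((S ^ N : X →L[ℂ] X) : X →ₗ[ℂ] X) ⊔ LinearMap.range ((S ^ N : X →L[ℂ] X) : X →ₗ[ℂ] X) = ⊤ := by
  rw [eq_top_iff]
  intro x _
  have hR : LinearMap.range ((S ^ N : X →L[ℂ] X) : X →ₗ[ℂ] X) = LinearMap.range ((S ^ (N + N) : X →L[ℂ] X) : X →ₗ[ℂ] X) :=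
    range_stab_of_le S hd hN (Nat.le_add_right N N)
  have hx : (S ^ N) x ∈ LinearMap.range ((S ^ (N + N) : X →L[ℂ] X) : X →ₗ[ℂ] X) := hR ▸ ⟨x, rfl⟩
  obtain ⟨y, hy⟩ := hx
  have hk : x - (S ^ N) y ∈ LinearMap.ker ((S ^ N : X →L[ℂ] X) : X →ₗ[ℂ] X) := by
    rw [LinearMap.mem_ker, map_sub]
    have : (S ^ N) ((S ^ N) y) = (S ^ (N + N)) y := by
      rw [pow_add]; rfl
    rw [ContinuousLinearMap.coe_coe] at hy ⊢; rw [this, hy, sub_self]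
  exact Submodule.mem_sup.2 ⟨x - (S ^ N) y, hk, (S ^ N) y, ⟨y, rfl⟩, by abel⟩

lemma fd_quot_range (S : X →L[ℂ] X) (hfd : FiniteDimensional ℂ (LinearMap.ker ((S : X →L[ℂ] X) : X →ₗ[ℂ] X))) {d N : ℕ}
    (hd : LinearMap.range ((S ^ d : X →L[ℂ] X) : X →ₗ[ℂ] X) = LinearMap.range ((S ^ (d + 1) : X →L[ℂ] X) : X →ₗ[ℂ] X)) (hN : d ≤ N) :
    FiniteDimensional ℂ (X ⧸ LinearMap.range ((S ^ N : X →L[ℂ] X) : X →ₗ[ℂ] X)) := by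
  haveI := fd_ker_pow S hfd N
  set R := LinearMap.range ((S ^ N : X →L[ℂ] X) : X →ₗ[ℂ] X)
  let g : ↥(LinearMap.ker ((S ^ N : X →L[ℂ] X) : X →ₗ[ℂ] X)) →ₗ[ℂ] X ⧸ R := R.mkQ.comp (LinearMap.ker ((S ^ N : X →L[ℂ] X) : X →ₗ[ℂ] X)).subtype
  apply Module.Finite.of_surjective g
  intro z
  obtain ⟨x, rfl⟩ := Submodule.Quotient.mk_surjective R z
  have hx : x ∈ LinearMap.ker ((S ^ N : X →L[ℂ] X) : X →ₗ[ℂ] X) ⊔ R := by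
    rw [top_eq_ker_sup_range S hd hN]; trivial
  obtain ⟨k, hk, r, hr, hsum⟩ := Submodule.mem_sup.1 hx
  refine ⟨⟨k, hk⟩, ?_⟩
  show R.mkQ k = Submodule.Quotient.mk x
  rw [← hsum]
  simp [Submodule.Quotient.mk_add, (Submodule.Quotient.mk_eq_zero R).2 hr]

lemma fd_quot_mono {Y Y' : Submodule ℂ X} (h : Y ≤ Y')
    (hfd : FiniteDimensional ℂ (X ⧸ Y)) : FiniteDimensional ℂ (X ⧸ Y') := by
  haveI := hfd
  apply Module.Finite.of_surjective
    (Submodule.mapQ Y Y' LinearMap.id (fun x hx => h hx))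
  intro z
  obtain ⟨x, rfl⟩ := Submodule.Quotient.mk_surjective Y' z
  exact ⟨Submodule.Quotient.mk x, by rw [Submodule.mapQ_apply]; rfl⟩

lemma isClosed_range_of_fd_quot (A : X →L[ℂ] X)
    (h : FiniteDimensional ℂ (X ⧸ LinearMap.range ((A : X →L[ℂ] X) : X →ₗ[ℂ] X))) :
    IsClosed ((LinearMap.range ((A : X →L[ℂ] X) : X →ₗ[ℂ] X) : Submodule ℂ X) : Set X) := by
  haveI := h
  set Y := LinearMap.range ((A : X →L[ℂ] X) : X →ₗ[ℂ] X) with hY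
  obtain ⟨F, hF⟩ := Y.exists_isCompl
  haveI : FiniteDimensional ℂ F := (Submodule.quotientEquivOfIsCompl Y F hF).finiteDimensional
  let B : (X × ↥F) →L[ℂ] X :=
    A.comp (ContinuousLinearMap.fst ℂ X ↥F) + F.subtypeL.comp (ContinuousLinearMap.snd ℂ X ↥F)
  have hBapp : ∀ p : X × ↥F, B p = A p.1 + ↑p.2 := fun p => rfl
  have hsurj : Function.Surjective B := by
    intro z
    have hz : z ∈ Y ⊔ F := by rw [hF.codisjoint.eq_top]; trivial
    obtain ⟨y, hy, f, hf, hsum⟩ := Submodule.mem_sup.1 hz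
    obtain ⟨x, rfl⟩ := hy
    exact ⟨(x, ⟨f, hf⟩), by rw [hBapp]; exact hsum⟩
  have hopen : IsOpenMap B := B.isOpenMap hsurj
  have hcompl : (Y : Set X)ᶜ = B '' (Set.univ ×ˢ ({0}ᶜ : Set ↥F)) := by
    ext z
    constructor
    · intro hz
      have hz' : z ∈ Y ⊔ F := by rw [hF.codisjoint.eq_top]; trivial
      obtain ⟨y, hy, f, hf, hsum⟩ := Submodule.mem_sup.1 hz'
      obtain ⟨x, rfl⟩ := hy
      refine ⟨(x, ⟨f, hf⟩), ⟨trivial, ?_⟩, by rw [hBapp]; exact hsum⟩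
      simp only [Set.mem_compl_iff, Set.mem_singleton_iff]
      intro hf0
      apply hz
      rw [← hsum]
      have : f = 0 := by simpa using congrArg Subtype.val hf0
      rw [this, add_zero]
      exact ⟨x, rfl⟩
    · rintro ⟨⟨x, f⟩, ⟨-, hf⟩, rfl⟩
      simp only [Set.mem_compl_iff, SetLike.mem_coe]
      intro hmem
      rw [hBapp] at hmem
      have hfY : (f : X) ∈ Y := by
        have := Y.sub_mem hmem ⟨x, rfl⟩
        simpa using this
      have hfF : (f : X) ∈ F := f.2
      have : (f : X) = 0 := by
        have := hF.disjoint.le_bot ⟨hfY, hfF⟩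
        simpa using this
      exact hf (by simpa [Set.mem_singleton_iff] using Subtype.ext this)
  rw [← isOpen_compl_iff, hcompl]
  exact hopen _ (isOpen_univ.prod (isClosed_singleton.isOpen_compl))

lemma isUnit_of_bijective (S : X →L[ℂ] X) (h1 : LinearMap.ker ((S : X →L[ℂ] X) : X →ₗ[ℂ] X) = ⊥)
    (h2 : LinearMap.range ((S : X →L[ℂ] X) : X →ₗ[ℂ] X) = ⊤) : IsUnit S := by
  let e := ContinuousLinearEquiv.ofBijective S h1 h2
  refine ⟨⟨S, (e.symm : X →L[ℂ] X), ?_, ?_⟩, rfl⟩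
  · ext x
    exact ContinuousLinearEquiv.ofBijective_apply_symm_apply S h1 h2 x
  · ext x
    exact ContinuousLinearEquiv.ofBijective_symm_apply_apply S h1 h2 x

lemma descent_step (S : X →L[ℂ] X) (m : ℕ)
    (hQ : FiniteDimensional ℂ (↥(LinearMap.range ((S ^ m : X →L[ℂ] X) : X →ₗ[ℂ] X)) ⧸
      Submodule.comap (LinearMap.range ((S ^ m : X →L[ℂ] X) : X →ₗ[ℂ] X)).subtype (LinearMap.range ((S ^ (m + 1) : X →L[ℂ] X) : X →ₗ[ℂ] X))))
    (hK : FiniteDimensional ℂ ↥(LinearMap.ker ((S : X →L[ℂ] X) : X →ₗ[ℂ] X) ⊓ LinearMap.range ((S ^ m : X →L[ℂ] X) : X →ₗ[ℂ] X)))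
    (heq : finrank ℂ ↥(LinearMap.ker ((S : X →L[ℂ] X) : X →ₗ[ℂ] X) ⊓ LinearMap.range ((S ^ m : X →L[ℂ] X) : X →ₗ[ℂ] X)) =
      finrank ℂ (↥(LinearMap.range ((S ^ m : X →L[ℂ] X) : X →ₗ[ℂ] X)) ⧸
        Submodule.comap (LinearMap.range ((S ^ m : X →L[ℂ] X) : X →ₗ[ℂ] X)).subtype (LinearMap.range ((S ^ (m + 1) : X →L[ℂ] X) : X →ₗ[ℂ] X)))) :
    FiniteDimensional ℂ (↥(LinearMap.range ((S ^ (m + 1) : X →L[ℂ] X) : X →ₗ[ℂ] X)) ⧸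
      Submodule.comap (LinearMap.range ((S ^ (m + 1) : X →L[ℂ] X) : X →ₗ[ℂ] X)).subtype (LinearMap.range ((S ^ (m + 2) : X →L[ℂ] X) : X →ₗ[ℂ] X))) ∧
    FiniteDimensional ℂ ↥(LinearMap.ker ((S : X →L[ℂ] X) : X →ₗ[ℂ] X) ⊓ LinearMap.range ((S ^ (m + 1) : X →L[ℂ] X) : X →ₗ[ℂ] X)) ∧
    finrank ℂ ↥(LinearMap.ker ((S : X →L[ℂ] X) : X →ₗ[ℂ] X) ⊓ LinearMap.range ((S ^ (m + 1) : X →L[ℂ] X) : X →ₗ[ℂ] X)) =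
      finrank ℂ (↥(LinearMap.range ((S ^ (m + 1) : X →L[ℂ] X) : X →ₗ[ℂ] X)) ⧸
        Submodule.comap (LinearMap.range ((S ^ (m + 1) : X →L[ℂ] X) : X →ₗ[ℂ] X)).subtype
          (LinearMap.range ((S ^ (m + 2) : X →L[ℂ] X) : X →ₗ[ℂ] X))) := by
  haveI := hQ; haveI := hK
  set Rm := LinearMap.range ((S ^ m : X →L[ℂ] X) : X →ₗ[ℂ] X) with hRm
  set Rm1 := LinearMap.range ((S ^ (m + 1) : X →L[ℂ] X) : X →ₗ[ℂ] X) with hRm1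
  set Rm2 := LinearMap.range ((S ^ (m + 2) : X →L[ℂ] X) : X →ₗ[ℂ] X) with hRm2
  set pm := Submodule.comap Rm.subtype Rm1 with hpm
  set pm1 := Submodule.comap Rm1.subtype Rm2 with hpm1
  set Km := LinearMap.ker ((S : X →L[ℂ] X) : X →ₗ[ℂ] X) ⊓ Rm with hKm
  set Km1 := LinearMap.ker ((S : X →L[ℂ] X) : X →ₗ[ℂ] X) ⊓ Rm1 with hKm1
  have hmap : ∀ x ∈ Rm, S x ∈ Rm1 := by
    rintro _ ⟨y, rfl⟩
    exact ⟨y, pow_apply_succ' S m y⟩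
  have hmap2 : ∀ x ∈ Rm1, S x ∈ Rm2 := by
    rintro _ ⟨y, rfl⟩
    exact ⟨y, pow_apply_succ' S (m + 1) y⟩
  set f : ↥Rm →ₗ[ℂ] ↥Rm1 := (S : X →ₗ[ℂ] X).restrict hmap with hf
  have hle : pm ≤ Submodule.comap f pm1 := by
    intro x hx
    rw [hpm, Submodule.mem_comap] at hx
    rw [Submodule.mem_comap, hpm1, Submodule.mem_comap]
    exact hmap2 _ hx
  set φ := Submodule.mapQ pm pm1 f hle with hφ
  have hφs : Function.Surjective φ := by
    intro z
    obtain ⟨y, rfl⟩ := Submodule.Quotient.mk_surjective pm1 z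
    obtain ⟨u, hu⟩ := LinearMap.mem_range.mp y.2
    refine ⟨Submodule.Quotient.mk (⟨(S ^ m) u, ⟨u, rfl⟩⟩ : ↥Rm), ?_⟩
    rw [hφ, Submodule.mapQ_apply]
    congr 1
    refine Subtype.ext ?_
    show S ((S ^ m) u) = (y : X)
    rw [← pow_apply_succ']
    exact hu
  set ψ : ↥Km →ₗ[ℂ] (↥Rm ⧸ pm) :=
    pm.mkQ.comp (Submodule.inclusion (inf_le_right : Km ≤ Rm)) with hψ
  have hKm1le : Km1 ≤ Km := inf_le_inf_left _ (range_pow_succ_le S m)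
  have hψker : LinearMap.ker ψ = Submodule.comap Km.subtype Km1 := by
    ext x
    rw [LinearMap.mem_ker, hψ, LinearMap.comp_apply, Submodule.mkQ_apply,
      Submodule.Quotient.mk_eq_zero, Submodule.mem_comap]
    constructor
    · intro hx
      have h1 : (x : X) ∈ Rm1 := hx
      exact Submodule.mem_inf.mpr ⟨x.2.1, h1⟩
    · intro hx
      exact (Submodule.mem_inf.mp hx).2
  have hψrange : LinearMap.range ψ = LinearMap.ker φ := by
    apply le_antisymm
    · rintro _ ⟨x, rfl⟩
      rw [LinearMap.mem_ker]
      show φ (pm.mkQ (Submodule.inclusion (inf_le_right : Km ≤ Rm) x)) = 0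
      rw [Submodule.mkQ_apply, hφ, Submodule.mapQ_apply, Submodule.Quotient.mk_eq_zero,
        hpm1, Submodule.mem_comap]
      show S (x : X) ∈ Rm2
      have hx0 : S (x : X) = 0 := x.2.1
      rw [hx0]
      exact Rm2.zero_mem
    · intro z hz
      obtain ⟨x, rfl⟩ := Submodule.Quotient.mk_surjective pm z
      rw [LinearMap.mem_ker, hφ, Submodule.mapQ_apply, Submodule.Quotient.mk_eq_zero,
        hpm1, Submodule.mem_comap] at hz
      have hz' : S (x : X) ∈ Rm2 := hz
      obtain ⟨u, hu⟩ := LinearMap.mem_range.mp hz'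
      have hy1 : (S ^ (m + 1)) u ∈ Rm1 := ⟨u, rfl⟩
      have hkmem : (x : X) - (S ^ (m + 1)) u ∈ Km := by
        refine Submodule.mem_inf.mpr ⟨?_, ?_⟩
        · rw [ContinuousLinearMap.coe_coe] at hu; rw [LinearMap.mem_ker, map_sub, ContinuousLinearMap.coe_coe, ← pow_apply_succ', hu, sub_self]
        · exact Rm.sub_mem x.2 (range_pow_succ_le S m hy1)
      refine ⟨⟨_, hkmem⟩, ?_⟩
      show Submodule.Quotient.mk
          (Submodule.inclusion (inf_le_right : Km ≤ Rm) ⟨_, hkmem⟩) = Submodule.Quotient.mk x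
      rw [Submodule.Quotient.eq]
      rw [hpm, Submodule.mem_comap]
      show ((Submodule.inclusion (inf_le_right : Km ≤ Rm) ⟨_, hkmem⟩ - x : ↥Rm) : X) ∈ Rm1
      have hcoe : ((Submodule.inclusion (inf_le_right : Km ≤ Rm) ⟨_, hkmem⟩ - x : ↥Rm) : X)
          = -((S ^ (m + 1)) u) := by
        show ((x : X) - (S ^ (m + 1)) u) - (x : X) = -((S ^ (m + 1)) u)
        abel
      rw [hcoe]
      exact Rm1.neg_mem hy1
  haveI hQ1 : FiniteDimensional ℂ (↥Rm1 ⧸ pm1) := Module.Finite.of_surjective φ hφs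
  have hrange_top : LinearMap.range φ = ⊤ := LinearMap.range_eq_top.mpr hφs
  have e1 : finrank ℂ (LinearMap.range φ) + finrank ℂ (LinearMap.ker φ) =
      finrank ℂ (↥Rm ⧸ pm) := LinearMap.finrank_range_add_finrank_ker φ
  rw [hrange_top, finrank_top] at e1
  have e2 : finrank ℂ (LinearMap.range ψ) + finrank ℂ (LinearMap.ker ψ) = finrank ℂ Km :=
    LinearMap.finrank_range_add_finrank_ker ψ
  haveI hK1 : FiniteDimensional ℂ Km1 := Submodule.finiteDimensional_of_le hKm1le
  have e3 : finrank ℂ (LinearMap.ker ψ) = finrank ℂ Km1 := by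
    rw [hψker]
    exact LinearEquiv.finrank_eq (Submodule.comapSubtypeEquivOfLe hKm1le)
  have e4 : finrank ℂ (LinearMap.range ψ) = finrank ℂ (LinearMap.ker φ) := by rw [hψrange]
  refine ⟨hQ1, hK1, ?_⟩
  omega

lemma descent_of_bweyl (S : X →L[ℂ] X) (hbw : IsBWeyl S) {p : ℕ}
    (hp : LinearMap.ker ((S ^ p : X →L[ℂ] X) : X →ₗ[ℂ] X) = LinearMap.ker ((S ^ (p + 1) : X →L[ℂ] X) : X →ₗ[ℂ] X)) : HasFiniteDescent S := by
  obtain ⟨n, -, -, hK, hQ, heq⟩ := hbw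
  have key : ∀ k : ℕ,
      FiniteDimensional ℂ (↥(LinearMap.range ((S ^ (n + k) : X →L[ℂ] X) : X →ₗ[ℂ] X)) ⧸
        Submodule.comap (LinearMap.range ((S ^ (n + k) : X →L[ℂ] X) : X →ₗ[ℂ] X)).subtype
          (LinearMap.range ((S ^ (n + k + 1) : X →L[ℂ] X) : X →ₗ[ℂ] X))) ∧
      FiniteDimensional ℂ ↥(LinearMap.ker ((S : X →L[ℂ] X) : X →ₗ[ℂ] X) ⊓ LinearMap.range ((S ^ (n + k) : X →L[ℂ] X) : X →ₗ[ℂ] X)) ∧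
      finrank ℂ ↥(LinearMap.ker ((S : X →L[ℂ] X) : X →ₗ[ℂ] X) ⊓ LinearMap.range ((S ^ (n + k) : X →L[ℂ] X) : X →ₗ[ℂ] X)) =
        finrank ℂ (↥(LinearMap.range ((S ^ (n + k) : X →L[ℂ] X) : X →ₗ[ℂ] X)) ⧸
          Submodule.comap (LinearMap.range ((S ^ (n + k) : X →L[ℂ] X) : X →ₗ[ℂ] X)).subtype
            (LinearMap.range ((S ^ (n + k + 1) : X →L[ℂ] X) : X →ₗ[ℂ] X))) := by
    intro k
    induction k with
    | zero => exact ⟨hQ, hK, heq⟩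
    | succ k ih => exact descent_step S (n + k) ih.1 ih.2.1 ih.2.2
  obtain ⟨hQM, hKM, heqM⟩ := key p
  set M := n + p with hM
  have hKbot : LinearMap.ker ((S : X →L[ℂ] X) : X →ₗ[ℂ] X) ⊓ LinearMap.range ((S ^ M : X →L[ℂ] X) : X →ₗ[ℂ] X) = ⊥ :=
    ker_inf_range_bot S hp (Nat.le_add_left p n)
  rw [hKbot, finrank_bot] at heqM
  haveI := hQM
  have hsub : Subsingleton (↥(LinearMap.range ((S ^ M : X →L[ℂ] X) : X →ₗ[ℂ] X)) ⧸
      Submodule.comap (LinearMap.range ((S ^ M : X →L[ℂ] X) : X →ₗ[ℂ] X)).subtype (LinearMap.range ((S ^ (M + 1) : X →L[ℂ] X) : X →ₗ[ℂ] X))) :=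
    Module.finrank_zero_iff.mp heqM.symm
  have htop : Submodule.comap (LinearMap.range ((S ^ M : X →L[ℂ] X) : X →ₗ[ℂ] X)).subtype
      (LinearMap.range ((S ^ (M + 1) : X →L[ℂ] X) : X →ₗ[ℂ] X)) = ⊤ :=
    Submodule.Quotient.subsingleton_iff.mp hsub
  refine ⟨M, le_antisymm ?_ (range_pow_succ_le S M)⟩
  intro x hx
  have hmem : (⟨x, hx⟩ : ↥(LinearMap.range ((S ^ M : X →L[ℂ] X) : X →ₗ[ℂ] X))) ∈ Submodule.comap
      (LinearMap.range ((S ^ M : X →L[ℂ] X) : X →ₗ[ℂ] X)).subtype (LinearMap.range ((S ^ (M + 1) : X →L[ℂ] X) : X →ₗ[ℂ] X)) := by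
    rw [htop]; trivial
  exact hmem

end Stmt5Aux

end Stmt5Aux

/-- If `Π_a(T) ⊆ σ(T)\σ_bw(T)` then `Π_a⁰(T) = Π⁰(T)`. -/
theorem stmt5 (T : X →L[ℂ] X) (h : leftPoles T ⊆ spectrum ℂ T \ sigma_bw T) :
    leftPoles0 T = poles0 T := by
  classical
  ext l
  simp only [leftPoles0, poles0, leftPoles, poles, Set.mem_setOf_eq]
  constructor
  · rintro ⟨⟨hsa, p, hp, hmin, hcl⟩, hker⟩
    have hmem : l ∈ spectrum ℂ T \ sigma_bw T :=
      h (show l ∈ leftPoles T from ⟨hsa, p, hp, hmin, hcl⟩)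
    have hbw : IsBWeyl (T - l • 1) := by
      have h2 := hmem.2
      simp only [sigma_bw, Set.mem_setOf_eq, not_not] at h2
      exact h2
    exact ⟨⟨hmem.1, ⟨p, hp⟩, Stmt5Aux.descent_of_bweyl _ hbw hp⟩, hker⟩
  · rintro ⟨⟨hspec, ⟨a, ha⟩, ⟨d, hd⟩⟩, hker⟩
    set S := T - l • 1 with hS
    have hkne : LinearMap.ker ((S : X →L[ℂ] X) : X →ₗ[ℂ] X) ≠ ⊥ := by
      intro hbot
      have hinjpow : ∀ m : ℕ, LinearMap.ker ((S ^ m : X →L[ℂ] X) : X →ₗ[ℂ] X) = ⊥ := by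
        intro m
        induction m with
        | zero =>
          rw [pow_zero]
          ext x
          simp [LinearMap.mem_ker, ContinuousLinearMap.one_apply]
        | succ m ih =>
          rw [eq_bot_iff]
          intro x hx
          rw [LinearMap.mem_ker, ContinuousLinearMap.coe_coe, Stmt5Aux.pow_apply_succ'] at hx
          have h1 : (S ^ m) x ∈ LinearMap.ker ((S : X →L[ℂ] X) : X →ₗ[ℂ] X) := LinearMap.mem_ker.mpr hx
          rw [hbot, Submodule.mem_bot] at h1
          have h2 : x ∈ LinearMap.ker ((S ^ m : X →L[ℂ] X) : X →ₗ[ℂ] X) := LinearMap.mem_ker.mpr h1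
          rw [ih, Submodule.mem_bot] at h2
          simp [h2]
      have hsurj : LinearMap.range ((S : X →L[ℂ] X) : X →ₗ[ℂ] X) = ⊤ := by
        rw [eq_top_iff]
        intro x _
        have hx : (S ^ d) x ∈ LinearMap.range ((S ^ (d + 1) : X →L[ℂ] X) : X →ₗ[ℂ] X) := hd ▸ ⟨x, rfl⟩
        obtain ⟨y, hy⟩ := LinearMap.mem_range.mp hx
        have hdiff : x - S y ∈ LinearMap.ker ((S ^ d : X →L[ℂ] X) : X →ₗ[ℂ] X) := by
          rw [ContinuousLinearMap.coe_coe] at hy; rw [LinearMap.mem_ker, map_sub, ContinuousLinearMap.coe_coe, ← Stmt5Aux.pow_apply_succ, hy, sub_self]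
        rw [hinjpow d, Submodule.mem_bot, sub_eq_zero] at hdiff
        exact ⟨y, hdiff.symm⟩
      have hunit := Stmt5Aux.isUnit_of_bijective S hbot hsurj
      rw [spectrum.mem_iff] at hspec
      apply hspec
      have halg : (algebraMap ℂ (X →L[ℂ] X)) l - T = -S := by
        rw [Algebra.algebraMap_eq_smul_one, hS, neg_sub]
      rw [halg]
      exact hunit.neg
    have hsa : l ∈ sigma_a T := by
      obtain ⟨x, hx, hx0⟩ := (Submodule.ne_bot_iff _).mp hkne
      show ¬ ∃ c > (0 : ℝ), ∀ y : X, c * ‖y‖ ≤ ‖(T - l • 1) y‖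
      rintro ⟨c, hc, hb⟩
      have hbx := hb x
      have hSx : (T - l • 1) x = 0 := LinearMap.mem_ker.mp hx
      rw [hSx, norm_zero] at hbx
      have : 0 < c * ‖x‖ := mul_pos hc (norm_pos_iff.mpr hx0)
      linarith
    have hex : ∃ k : ℕ, LinearMap.ker ((S ^ k : X →L[ℂ] X) : X →ₗ[ℂ] X) = LinearMap.ker ((S ^ (k + 1) : X →L[ℂ] X) : X →ₗ[ℂ] X) := ⟨a, ha⟩
    have hp := Nat.find_spec hex
    have hmin : ∀ m : ℕ, m < Nat.find hex →
        LinearMap.ker ((S ^ m : X →L[ℂ] X) : X →ₗ[ℂ] X) ≠ LinearMap.ker ((S ^ (m + 1) : X →L[ℂ] X) : X →ₗ[ℂ] X) :=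
      fun m hm => Nat.find_min hex hm
    have hfdk : FiniteDimensional ℂ (LinearMap.ker ((S : X →L[ℂ] X) : X →ₗ[ℂ] X)) := hker
    have h1 : FiniteDimensional ℂ (X ⧸ LinearMap.range ((S ^ max (Nat.find hex + 1) d : X →L[ℂ] X) : X →ₗ[ℂ] X)) :=
      Stmt5Aux.fd_quot_range S hfdk hd (le_max_right _ _)
    have h2 : FiniteDimensional ℂ (X ⧸ LinearMap.range ((S ^ (Nat.find hex + 1) : X →L[ℂ] X) : X →ₗ[ℂ] X)) :=
      Stmt5Aux.fd_quot_mono (Stmt5Aux.range_pow_le S (le_max_left (Nat.find hex + 1) d)) h1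
    have h3 := Stmt5Aux.isClosed_range_of_fd_quot (S ^ (Nat.find hex + 1)) h2
    exact ⟨⟨hsa, Nat.find hex, hp, hmin, h3⟩, hker⟩
end

section
/- A bounded linear operator T on a complex Banach space belongs to class (ab_e) if and only if T belongs to class (ab) and σ_e(T) = σ_w(T). -/
open Filter Topology

variable {X : Type*} [NormedAddCommGroup X] [NormedSpace ℂ X] [CompleteSpace X]

section AuxProof

set_option linter.unusedSectionVars false
set_option maxHeartbeats 1000000

variable {E F' : Type*} [NormedAddCommGroup E] [NormedSpace ℂ E] [CompleteSpace E]
  [NormedAddCommGroup F'] [NormedSpace ℂ F'] [CompleteSpace F']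

theorem exists_lim (f : E →L[ℂ] F') {c : ℝ} (hc : 0 < c) (hb : ∀ x, c * ‖x‖ ≤ ‖f x‖)
    {u : ℕ → E} {y : F'} (hy : Tendsto (fun n => f (u n)) atTop (𝓝 y)) :
    ∃ x, Tendsto u atTop (𝓝 x) ∧ f x = y := by
  have hcs : CauchySeq fun n => f (u n) := hy.cauchySeq
  have hcu : CauchySeq u := by
    rw [Metric.cauchySeq_iff] at hcs ⊢
    intro ε hε
    obtain ⟨N, hN⟩ := hcs (c * ε) (by positivity)
    refine ⟨N, fun m hm n hn => ?_⟩
    have := hN m hm n hn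
    rw [dist_eq_norm] at this ⊢
    have h2 : c * ‖u m - u n‖ ≤ ‖f (u m) - f (u n)‖ := by
      simpa [map_sub] using hb (u m - u n)
    nlinarith [norm_nonneg (u m - u n)]
  obtain ⟨x, hx⟩ := cauchySeq_tendsto_of_complete hcu
  exact ⟨x, hx, tendsto_nhds_unique ((f.continuous.tendsto x).comp hx) hy⟩

theorem isClosed_range_of_bddBelow (f : E →L[ℂ] F') {c : ℝ} (hc : 0 < c)
    (hb : ∀ x, c * ‖x‖ ≤ ‖f x‖) : IsClosed (LinearMap.range f.toLinearMap : Set F') := by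
  apply IsSeqClosed.isClosed
  intro u y hu hy
  choose v hv using hu
  obtain ⟨x, -, hx⟩ := exists_lim f hc hb (u := v) (y := y) (by convert hy using 2 with n; exact hv n)
  exact ⟨x, hx⟩

/-- injective + closed range implies bounded below -/

theorem exists_bound_of_injective (f : E →L[ℂ] F') (hinj : LinearMap.ker f.toLinearMap = ⊥)
    (hcl : IsClosed (LinearMap.range f.toLinearMap : Set F')) :
    ∃ c > (0:ℝ), ∀ x, c * ‖x‖ ≤ ‖f x‖ := by
  haveI : CompleteSpace (LinearMap.range f.toLinearMap) := hcl.completeSpace_coe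
  set f' : E →L[ℂ] LinearMap.range f.toLinearMap := f.codRestrict _ (fun x => LinearMap.mem_range_self _ x)
  have hker : LinearMap.ker f'.toLinearMap = ⊥ := by
    rw [ContinuousLinearMap.ker_codRestrict]; exact hinj
  have hrange : LinearMap.range f'.toLinearMap = ⊤ := by
    ext ⟨y, hy⟩
    simp only [Submodule.mem_top, iff_true, LinearMap.mem_range]
    obtain ⟨x, hx⟩ := hy
    exact ⟨x, by ext; simpa [f'] using hx⟩
  let e := ContinuousLinearEquiv.ofBijective f' hker hrange
  set C := max ‖(e.symm : LinearMap.range f.toLinearMap →L[ℂ] E)‖ 1 with hC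
  have hC1 : (1:ℝ) ≤ C := le_max_right _ _
  have hCpos : (0:ℝ) < C := lt_of_lt_of_le one_pos hC1
  refine ⟨C⁻¹, by positivity, fun x => ?_⟩
  have h1 : ‖x‖ ≤ C * ‖f x‖ := by
    have : x = e.symm (e x) := (e.symm_apply_apply x).symm
    calc ‖x‖ = ‖e.symm (e x)‖ := by rw [← this]
    _ ≤ ‖(e.symm : LinearMap.range f.toLinearMap →L[ℂ] E)‖ * ‖e x‖ :=
        (e.symm : LinearMap.range f.toLinearMap →L[ℂ] E).le_opNorm _
    _ ≤ C * ‖e x‖ := by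
        apply mul_le_mul_of_nonneg_right (le_max_left _ _) (norm_nonneg _)
    _ = C * ‖f x‖ := by rfl
  calc C⁻¹ * ‖x‖ ≤ C⁻¹ * (C * ‖f x‖) := by
        exact mul_le_mul_of_nonneg_left h1 (by positivity)
    _ = ‖f x‖ := by field_simp

theorem isClosed_sup_fd (M F : Submodule ℂ X) (hM : IsClosed (M : Set X))
    [FiniteDimensional ℂ F] : IsClosed ((M ⊔ F : Submodule ℂ X) : Set X) := by
  letI : IsClosed (M : Set X) := hM
  have hcont : Continuous M.mkQ := M.isOpenQuotientMap_mkQ.continuous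
  haveI : FiniteDimensional ℂ (F.map M.mkQ) := Module.Finite.map F M.mkQ
  have hclosed : IsClosed ((F.map M.mkQ : Submodule ℂ (X ⧸ M)) : Set (X ⧸ M)) :=
    Submodule.closed_of_finiteDimensional _
  have hset : ((M ⊔ F : Submodule ℂ X) : Set X) = M.mkQ ⁻¹' (F.map M.mkQ : Set (X ⧸ M)) := by
    ext x
    simp only [SetLike.mem_coe, Set.mem_preimage]
    constructor
    · intro hx
      obtain ⟨m, hm, f, hf, rfl⟩ := Submodule.mem_sup.1 hx
      refine ⟨f, hf, ?_⟩
      simp [Submodule.Quotient.mk_add, (Submodule.Quotient.mk_eq_zero M).2 hm]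
    · rintro ⟨f, hf, hfx⟩
      have : x - f ∈ M := by
        rw [← Submodule.Quotient.eq M]
        exact hfx.symm
      exact Submodule.mem_sup.2 ⟨x - f, this, f, hf, sub_add_cancel x f⟩
  rw [hset]
  exact hclosed.preimage hcont

theorem map_isClosed (S : X →L[ℂ] X) (hker : FiniteDimensional ℂ (LinearMap.ker S.toLinearMap))
    (hcl : IsClosed ((LinearMap.range S.toLinearMap : Submodule ℂ X) : Set X))
    (M : Submodule ℂ X) (hM : IsClosed (M : Set X)) :
    IsClosed ((M.map S.toLinearMap : Submodule ℂ X) : Set X) := by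
  haveI := hker
  obtain ⟨f, hf⟩ := Submodule.ClosedComplemented.of_finiteDimensional (LinearMap.ker S.toLinearMap)
  set π : X →L[ℂ] X := (LinearMap.ker S.toLinearMap).subtypeL.comp f with hπ
  have hπmem : ∀ x, π x ∈ LinearMap.ker S.toLinearMap := fun x => (f x).2
  have hπid : ∀ x ∈ LinearMap.ker S.toLinearMap, π x = x := by
    intro x hx
    have := hf ⟨x, hx⟩
    simpa [hπ] using congrArg (Subtype.val) this
  have hSπ : ∀ x, S (π x) = 0 := fun x => hπmem x
  set X₁ : Submodule ℂ X := LinearMap.ker π.toLinearMap with hX₁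
  haveI : CompleteSpace X₁ := (ContinuousLinearMap.isClosed_ker π).completeSpace_coe
  set C : X₁ →L[ℂ] X := S.comp X₁.subtypeL with hCdef
  have hCker : LinearMap.ker C.toLinearMap = ⊥ := by
    rw [Submodule.eq_bot_iff]
    rintro ⟨x, hx⟩ hCx
    have hxker : x ∈ LinearMap.ker S.toLinearMap := by
      simpa [hCdef] using hCx
    have h1 : π x = x := hπid x hxker
    have h2 : π x = 0 := hx
    have : x = 0 := by rw [← h1, h2]
    simp [this]
  have hmemX₁ : ∀ x : X, x - π x ∈ X₁ := by
    intro x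
    have : π (π x) = π x := hπid _ (hπmem x)
    simp [hX₁, LinearMap.mem_ker, map_sub, this]
  have hCrange : LinearMap.range C.toLinearMap = LinearMap.range S.toLinearMap := by
    apply le_antisymm
    · rintro y ⟨⟨x, hx⟩, rfl⟩
      exact ⟨x, rfl⟩
    · rintro y ⟨x, rfl⟩
      refine ⟨⟨x - π x, hmemX₁ x⟩, ?_⟩
      simp [hCdef, map_sub, hSπ x]
  obtain ⟨c, hc, hb⟩ := exists_bound_of_injective C hCker (by rw [hCrange]; exact hcl)
  apply IsSeqClosed.isClosed
  intro u y hu hy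
  have hmem : ∀ n, ∃ m ∈ M, S m = u n := fun n => hu n
  choose m hmM hSm using hmem
  set v : ℕ → X₁ := fun n => ⟨m n - π (m n), hmemX₁ _⟩ with hv
  have hCv : ∀ n, C (v n) = u n := by
    intro n
    simp [hCdef, hv, map_sub, hSπ, hSm n]
  obtain ⟨x, hxlim, hCx⟩ := exists_lim C hc hb (u := v) (y := y) (by simpa [hCv] using hy)
  have hsupclosed : IsClosed ((M ⊔ LinearMap.ker S.toLinearMap : Submodule ℂ X) : Set X) :=
    isClosed_sup_fd M (LinearMap.ker S.toLinearMap) hM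
  have hvmem : ∀ n, (v n : X) ∈ (M ⊔ LinearMap.ker S.toLinearMap : Submodule ℂ X) := by
    intro n
    apply Submodule.mem_sup.2
    exact ⟨m n, hmM n, -(π (m n)), neg_mem (hπmem _), (sub_eq_add_neg (m n) (π (m n))).symm⟩
  have hxmem : (x : X) ∈ (M ⊔ LinearMap.ker S.toLinearMap : Submodule ℂ X) := by
    refine hsupclosed.mem_of_tendsto ((continuous_subtype_val.tendsto x).comp hxlim)
      (Eventually.of_forall hvmem)
  obtain ⟨m₀, hm₀, k, hk, hmk⟩ := Submodule.mem_sup.1 hxmem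
  refine ⟨m₀, hm₀, ?_⟩
  have : S (x : X) = y := by simpa [hCdef] using hCx
  rw [← this, ← hmk, map_add]
  have hk0 : S k = 0 := hk
  rw [hk0, add_zero]
  rfl

theorem pow_apply_succ (S : X →L[ℂ] X) (n : ℕ) (x : X) : (S^(n+1)) x = (S^n) (S x) := by
  rw [pow_succ]; rfl

theorem pow_apply_succ' (S : X →L[ℂ] X) (n : ℕ) (x : X) : (S^(n+1)) x = S ((S^n) x) := by
  rw [pow_succ']; rfl

theorem range_pow_succ (S : X →L[ℂ] X) (n : ℕ) :
    LinearMap.range (S^(n+1)).toLinearMap = (LinearMap.range (S^n).toLinearMap).map S.toLinearMap := by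
  ext y
  constructor
  · rintro ⟨x, rfl⟩
    exact ⟨(S^n) x, ⟨x, rfl⟩, (pow_apply_succ' S n x).symm⟩
  · rintro ⟨z, ⟨x, rfl⟩, rfl⟩
    exact ⟨x, pow_apply_succ' S n x⟩

theorem ker_pow_stab (S : X →L[ℂ] X) (p : ℕ)
    (hp : LinearMap.ker (S^p).toLinearMap = LinearMap.ker (S^(p+1)).toLinearMap) (k : ℕ) :
    LinearMap.ker (S^(p+k)).toLinearMap = LinearMap.ker (S^p).toLinearMap := by
  induction k with
  | zero => rfl
  | succ k ih =>
    ext x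
    have h1 : x ∈ LinearMap.ker (S^(p+(k+1))).toLinearMap ↔ S x ∈ LinearMap.ker (S^(p+k)).toLinearMap := by
      simp only [LinearMap.mem_ker, ContinuousLinearMap.coe_coe]
      rw [show p + (k+1) = (p+k)+1 by ring, pow_apply_succ]
    rw [h1, ih]
    simp only [LinearMap.mem_ker, ContinuousLinearMap.coe_coe]
    have hpx := congrArg (x ∈ ·) hp
    simp only [LinearMap.mem_ker, ContinuousLinearMap.coe_coe] at hpx
    rw [← pow_apply_succ, hpx]

theorem range_pow_stab (S : X →L[ℂ] X) (p : ℕ)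
    (hr : LinearMap.range (S^(p+1)).toLinearMap = LinearMap.range (S^p).toLinearMap) (k : ℕ) :
    LinearMap.range (S^(p+k)).toLinearMap = LinearMap.range (S^p).toLinearMap := by
  induction k with
  | zero => rfl
  | succ k ih =>
    rw [show p + (k+1) = (p+k)+1 by ring, range_pow_succ, ih, ← range_pow_succ, hr]

theorem ker_le_ker_pow_succ (S : X →L[ℂ] X) (n : ℕ) :
    LinearMap.ker S.toLinearMap ≤ LinearMap.ker (S^(n+1)).toLinearMap := by
  intro x hx
  simp only [LinearMap.mem_ker, ContinuousLinearMap.coe_coe] at *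
  rw [pow_apply_succ, hx, map_zero]

theorem eq_zero_of_ker_inf_range (S : X →L[ℂ] X) (p : ℕ)
    (hp : LinearMap.ker (S^p).toLinearMap = LinearMap.ker (S^(p+1)).toLinearMap)
    {x : X} (hx : x ∈ LinearMap.range (S^p).toLinearMap) (hSx : S x = 0) : x = 0 := by
  obtain ⟨y, rfl⟩ := hx
  have : y ∈ LinearMap.ker (S^(p+1)).toLinearMap := by
    simp only [LinearMap.mem_ker, ContinuousLinearMap.coe_coe]
    rw [pow_apply_succ']
    exact hSx  -- no: S ((S^p) y) vs S(...)
  have hy : y ∈ LinearMap.ker (S^p).toLinearMap := hp ▸ this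
  exact hy

theorem fd_of_ker_quot {D : Type*} [AddCommGroup D] [Module ℂ D] (K : Submodule ℂ D)
    [FiniteDimensional ℂ K] [FiniteDimensional ℂ (D ⧸ K)] : FiniteDimensional ℂ D := by
  have h1 : ((⊤ : Submodule ℂ D).map K.mkQ).FG := by
    have : Module.Finite ℂ (D ⧸ K) := inferInstance
    rw [Submodule.map_top, LinearMap.range_eq_top.2 (Submodule.mkQ_surjective K)]
    exact Module.finite_def.1 this
  have h2 : ((⊤ : Submodule ℂ D) ⊓ LinearMap.ker K.mkQ).FG := by
    rw [top_inf_eq, Submodule.ker_mkQ]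
    have : Module.Finite ℂ K := inferInstance
    exact (Submodule.fg_top K).1 (Module.finite_def.1 this)
  exact Module.finite_def.2 (Submodule.fg_of_fg_map_of_fg_inf_ker K.mkQ h1 h2)

theorem fd_ker_pow (S : X →L[ℂ] X) (hker : FiniteDimensional ℂ (LinearMap.ker S.toLinearMap)) (n : ℕ) :
    FiniteDimensional ℂ (LinearMap.ker (S^n).toLinearMap) := by
  induction n with
  | zero =>
    have : LinearMap.ker (S^0).toLinearMap = ⊥ := by
      ext x; simp [LinearMap.mem_ker]
    rw [this]
    infer_instance
  | succ n ih =>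
    set D := LinearMap.ker (S^(n+1)).toLinearMap with hD
    have hmaps : ∀ x ∈ D, S x ∈ LinearMap.ker (S^n).toLinearMap := by
      intro x hx
      simp only [LinearMap.mem_ker, hD, ContinuousLinearMap.coe_coe] at *
      rw [← pow_apply_succ, hx]
    set g : D →ₗ[ℂ] LinearMap.ker (S^n).toLinearMap := (S : X →ₗ[ℂ] X).restrict hmaps with hg
    have hmem : ∀ x : LinearMap.ker g, (D.subtype.comp (LinearMap.ker g).subtype) x
        ∈ LinearMap.ker S.toLinearMap := by
      intro x
      have hx : g x.1 = 0 := x.2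
      have h2 : ((g x.1 : X)) = S ((x.1 : D) : X) := rfl
      simp only [LinearMap.mem_ker, LinearMap.comp_apply, Submodule.subtype_apply, ContinuousLinearMap.coe_coe]
      rw [← h2, hx]
      rfl
    haveI : FiniteDimensional ℂ (LinearMap.ker g) := by
      refine FiniteDimensional.of_injective
        (LinearMap.codRestrict (LinearMap.ker S.toLinearMap) (D.subtype.comp (LinearMap.ker g).subtype) hmem)
        ?_
      intro a b hab
      have := congrArg Subtype.val hab
      simp only [LinearMap.codRestrict_apply, LinearMap.comp_apply, Submodule.subtype_apply] at this
      exact Subtype.ext (Subtype.ext this)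
    haveI := ih
    haveI : FiniteDimensional ℂ (LinearMap.range g) := inferInstance
    haveI : FiniteDimensional ℂ (D ⧸ LinearMap.ker g) :=
      LinearEquiv.finiteDimensional g.quotKerEquivRange.symm
    exact fd_of_ker_quot (LinearMap.ker g)

theorem fredholm_stability (S : X →L[ℂ] X) (h1 : FiniteDimensional ℂ (LinearMap.ker S.toLinearMap))
    (h2 : IsClosed ((LinearMap.range S.toLinearMap : Submodule ℂ X) : Set X))
    (h3 : FiniteDimensional ℂ (X ⧸ LinearMap.range S.toLinearMap)) :
    ∃ ε > (0:ℝ), ∀ η : ℂ, ‖η‖ < ε →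
      IsClosed ((LinearMap.range (S - η • 1).toLinearMap : Submodule ℂ X) : Set X) ∧
      FiniteDimensional ℂ (X ⧸ LinearMap.range (S - η • 1).toLinearMap) := by
  haveI := h1; haveI := h3
  classical
  -- continuous projection onto ker S
  obtain ⟨f, hf⟩ := Submodule.ClosedComplemented.of_finiteDimensional (LinearMap.ker S.toLinearMap)
  set π : X →L[ℂ] X := (LinearMap.ker S.toLinearMap).subtypeL.comp f with hπ
  have hπmem : ∀ x, π x ∈ LinearMap.ker S.toLinearMap := fun x => (f x).2
  have hπid : ∀ x ∈ LinearMap.ker S.toLinearMap, π x = x := by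
    intro x hx
    have := hf ⟨x, hx⟩
    simpa [hπ] using congrArg (Subtype.val) this
  have hSπ : ∀ x, S (π x) = 0 := fun x => hπmem x
  set X₁ : Submodule ℂ X := LinearMap.ker π.toLinearMap with hX₁
  haveI : CompleteSpace X₁ := (ContinuousLinearMap.isClosed_ker π).completeSpace_coe
  have hmemX₁ : ∀ x : X, x - π x ∈ X₁ := by
    intro x
    have : π (π x) = π x := hπid _ (hπmem x)
    simp [hX₁, LinearMap.mem_ker, map_sub, this]
  -- finite-dimensional complement of range S
  obtain ⟨F, hF⟩ := Submodule.exists_isCompl (LinearMap.range S.toLinearMap)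
  haveI : FiniteDimensional ℂ F :=
    LinearEquiv.finiteDimensional (Submodule.quotientEquivOfIsCompl _ F hF)
  haveI : CompleteSpace F := FiniteDimensional.complete ℂ F
  set Φ : (X₁ × F) →L[ℂ] X := (S.comp X₁.subtypeL).coprod F.subtypeL with hΦ
  have hΦapp : ∀ v : X₁ × F, Φ v = S v.1 + (v.2 : X) := fun v => rfl
  have hkerΦ : LinearMap.ker Φ.toLinearMap = ⊥ := by
    rw [Submodule.eq_bot_iff]
    rintro ⟨⟨x, hx⟩, ⟨g, hg⟩⟩ hv
    have hSx : S x + g = 0 := hv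
    have hmem2 : S x = -g := by linear_combination (norm := abel) hSx
    have : S x ∈ LinearMap.range S.toLinearMap ⊓ F := ⟨⟨x, rfl⟩, hmem2 ▸ neg_mem hg⟩
    rw [hF.inf_eq_bot] at this
    have hg0 : g = 0 := by
      have := hmem2.symm.trans this
      simpa using this
    have hxk : x ∈ LinearMap.ker S.toLinearMap := by
      simp only [LinearMap.mem_ker, ContinuousLinearMap.coe_coe]
      rw [hmem2, hg0, neg_zero]
    have hx0 : x = 0 := by
      have h1 := hπid x hxk
      have h2 : π x = 0 := hx
      rw [← h1, h2]
    subst hx0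
    simp [Prod.ext_iff, hg0]
  have hrangeΦ : LinearMap.range Φ.toLinearMap = ⊤ := by
    rw [LinearMap.range_eq_top]
    intro y
    have : y ∈ LinearMap.range S.toLinearMap ⊔ F := by rw [hF.sup_eq_top]; trivial
    obtain ⟨r, ⟨x, rfl⟩, g, hg, rfl⟩ := Submodule.mem_sup.1 this
    refine ⟨(⟨x - π x, hmemX₁ x⟩, ⟨g, hg⟩), ?_⟩
    rw [ContinuousLinearMap.coe_coe, hΦapp]
    simp [map_sub, hSπ x]
  set e := ContinuousLinearEquiv.ofBijective Φ hkerΦ hrangeΦ with he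
  have heΦ : ∀ v, e v = Φ v := fun v => rfl
  set Es : X →L[ℂ] (X₁ × F) := (e.symm : X →L[ℂ] (X₁ × F)) with hEs
  set D : (X₁ × F) →L[ℂ] X := X₁.subtypeL.comp (ContinuousLinearMap.fst ℂ X₁ F) with hD
  have hDapp : ∀ v : X₁ × F, D v = (v.1 : X) := fun v => rfl
  set B : (X₁ × F) →L[ℂ] (X₁ × F) := Es.comp D with hB
  refine ⟨(‖B‖ + 1)⁻¹, by positivity, ?_⟩
  intro η hη
  have hpos : (0:ℝ) < ‖B‖ + 1 := by positivity
  have hlt : ‖η‖ * (‖B‖ + 1) < 1 := by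
    have h := mul_lt_mul_of_pos_right hη hpos
    rwa [inv_mul_cancel₀ hpos.ne'] at h
  have hsmall : ‖η • B‖ < 1 := by
    have h0 : ‖η • B‖ ≤ ‖η‖ * ‖B‖ := by
      apply ContinuousLinearMap.opNorm_le_bound _ (by positivity)
      intro v
      rw [ContinuousLinearMap.smul_apply, norm_smul, mul_assoc]
      exact mul_le_mul_of_nonneg_left (B.le_opNorm v) (norm_nonneg η)
    nlinarith [norm_nonneg η, norm_nonneg B]
  set u : ((X₁ × F) →L[ℂ] (X₁ × F))ˣ := Units.oneSub (η • B) hsmall with hu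
  have huval : (u : (X₁ × F) →L[ℂ] (X₁ × F)) = 1 - η • B := rfl
  set Φη : (X₁ × F) →L[ℂ] X := ((S - η • 1).comp X₁.subtypeL).coprod F.subtypeL with hΦη
  have hΦηapp : ∀ v : X₁ × F, Φη v = S v.1 - η • (v.1 : X) + (v.2 : X) := by
    intro v
    simp [hΦη, ContinuousLinearMap.coprod_apply, ContinuousLinearMap.sub_apply,
      ContinuousLinearMap.smul_apply, ContinuousLinearMap.one_apply]
  have hΦEs : ∀ w : X, Φ (Es w) = w := by
    intro w
    have h := heΦ (e.symm w)
    rw [e.apply_symm_apply] at h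
    exact h.symm
  have hcomp : ∀ v, Φη v = Φ ((u : (X₁ × F) →L[ℂ] (X₁ × F)) v) := by
    intro v
    rw [huval]
    have h1 : ((1 - η • B) : (X₁ × F) →L[ℂ] (X₁ × F)) v = v - η • (B v) := by
      simp [ContinuousLinearMap.sub_apply, ContinuousLinearMap.smul_apply]
    rw [h1, map_sub, map_smul]
    have hBv : Φ (B v) = D v := hΦEs (D v)
    rw [hBv, hΦηapp, hΦapp, hDapp]
    abel
  have huu : ∀ v, (↑u⁻¹ : (X₁ × F) →L[ℂ] (X₁ × F)) ((u : (X₁ × F) →L[ℂ] (X₁ × F)) v) = v := by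
    intro v
    calc (↑u⁻¹ : (X₁ × F) →L[ℂ] (X₁ × F)) ((u : (X₁ × F) →L[ℂ] (X₁ × F)) v)
        = ((↑u⁻¹ * ↑u : (X₁ × F) →L[ℂ] (X₁ × F))) v := rfl
    _ = (1 : (X₁ × F) →L[ℂ] (X₁ × F)) v := by rw [u.inv_mul]
    _ = v := rfl
  have hkerη : LinearMap.ker Φη.toLinearMap = ⊥ := by
    rw [Submodule.eq_bot_iff]
    intro v hv
    have h0 : Φ ((u : (X₁ × F) →L[ℂ] (X₁ × F)) v) = 0 := by rw [← hcomp]; exact hv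
    have h1 : (u : (X₁ × F) →L[ℂ] (X₁ × F)) v ∈ LinearMap.ker Φ.toLinearMap := h0
    rw [hkerΦ, Submodule.mem_bot] at h1
    have := huu v
    rw [h1, map_zero] at this
    exact this.symm
  have hsurjη : ∀ y : X, ∃ v, Φη v = y := by
    intro y
    refine ⟨(↑u⁻¹ : (X₁ × F) →L[ℂ] (X₁ × F)) (Es y), ?_⟩
    rw [hcomp]
    have huinv : (u : (X₁ × F) →L[ℂ] (X₁ × F)) ((↑u⁻¹ : (X₁ × F) →L[ℂ] (X₁ × F)) (Es y))
        = Es y := by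
      calc (u : (X₁ × F) →L[ℂ] (X₁ × F)) ((↑u⁻¹ : (X₁ × F) →L[ℂ] (X₁ × F)) (Es y))
          = ((↑u * ↑u⁻¹ : (X₁ × F) →L[ℂ] (X₁ × F))) (Es y) := rfl
      _ = (1 : (X₁ × F) →L[ℂ] (X₁ × F)) (Es y) := by rw [u.mul_inv]
      _ = Es y := rfl
    rw [huinv]
    exact hΦEs y
  -- bounded below for Φη
  set Kc : ℝ := ‖(↑u⁻¹ : (X₁ × F) →L[ℂ] (X₁ × F))‖ * ‖Es‖ + 1 with hKc
  have hKcpos : (0:ℝ) < Kc := by positivity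
  have hbb : ∀ v, Kc⁻¹ * ‖v‖ ≤ ‖Φη v‖ := by
    intro v
    have h1 : ‖v‖ ≤ Kc * ‖Φη v‖ := by
      have e1 : v = (↑u⁻¹ : (X₁ × F) →L[ℂ] (X₁ × F)) (Es (Φη v)) := by
        rw [hcomp]
        have : Es (Φ ((u : (X₁ × F) →L[ℂ] (X₁ × F)) v)) = (u : (X₁ × F) →L[ℂ] (X₁ × F)) v := by
          have h := congrArg Es (hΦEs (Φ ((u : (X₁ × F) →L[ℂ] (X₁ × F)) v))).symm
          -- Es (Φ w) = w since e.symm (e w) = w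
          have h2 : e.symm (e ((u : (X₁ × F) →L[ℂ] (X₁ × F)) v)) = (u : (X₁ × F) →L[ℂ] (X₁ × F)) v :=
            e.symm_apply_apply _
          exact h2
        rw [this, huu]
      calc ‖v‖ = ‖(↑u⁻¹ : (X₁ × F) →L[ℂ] (X₁ × F)) (Es (Φη v))‖ := by rw [← e1]
      _ ≤ ‖(↑u⁻¹ : (X₁ × F) →L[ℂ] (X₁ × F))‖ * ‖Es (Φη v)‖ := ContinuousLinearMap.le_opNorm _ _
      _ ≤ ‖(↑u⁻¹ : (X₁ × F) →L[ℂ] (X₁ × F))‖ * (‖Es‖ * ‖Φη v‖) := by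
          exact mul_le_mul_of_nonneg_left (Es.le_opNorm (Φη v))
            (norm_nonneg (↑u⁻¹ : (X₁ × F) →L[ℂ] (X₁ × F)))
      _ ≤ Kc * ‖Φη v‖ := by
          rw [← mul_assoc]
          apply mul_le_mul_of_nonneg_right _ (norm_nonneg _)
          rw [hKc]; linarith
    calc Kc⁻¹ * ‖v‖ ≤ Kc⁻¹ * (Kc * ‖Φη v‖) := mul_le_mul_of_nonneg_left h1 (by positivity)
    _ = ‖Φη v‖ := by field_simp
  -- the restriction to X₁
  set C : X₁ →L[ℂ] X := Φη.comp (ContinuousLinearMap.inl ℂ X₁ F) with hC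
  have hCapp : ∀ x : X₁, C x = (S - η • 1) (x : X) := by
    intro x
    rw [hC]
    have : Φη ((x, 0) : X₁ × F) = S x - η • (x : X) + ((0 : F) : X) := hΦηapp _
    simp only [ContinuousLinearMap.comp_apply, ContinuousLinearMap.inl_apply]
    rw [this]
    simp [ContinuousLinearMap.sub_apply, ContinuousLinearMap.smul_apply,
      ContinuousLinearMap.one_apply]
  have hCbb : ∀ x : X₁, Kc⁻¹ * ‖x‖ ≤ ‖C x‖ := by
    intro x
    have h0 : ‖((x, (0:F)) : X₁ × F)‖ = ‖x‖ := by
      rw [Prod.norm_def]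
      simp
    have := hbb ((x, 0) : X₁ × F)
    rw [h0] at this
    exact this
  have hCclosed : IsClosed ((LinearMap.range C.toLinearMap : Submodule ℂ X) : Set X) :=
    isClosed_range_of_bddBelow C (by positivity) hCbb
  constructor
  · -- range closed
    have hre : LinearMap.range (S - η • 1).toLinearMap =
        LinearMap.range C.toLinearMap ⊔ (LinearMap.ker S.toLinearMap).map (S - η • 1).toLinearMap := by
      apply le_antisymm
      · rintro y ⟨x, rfl⟩
        apply Submodule.mem_sup.2
        refine ⟨(S - η • 1) (x - π x), ⟨⟨x - π x, hmemX₁ x⟩, (hCapp _).symm ▸ rfl⟩,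
          (S - η • 1) (π x), Submodule.mem_map_of_mem (hπmem x), ?_⟩
        rw [ContinuousLinearMap.coe_coe, ← map_add]
        congr 1
        abel
      · apply sup_le
        · rintro y ⟨x, rfl⟩
          exact ⟨(x : X), (hCapp x).symm⟩
        · rintro y ⟨x, _, rfl⟩
          exact ⟨x, rfl⟩
    rw [hre]
    haveI : FiniteDimensional ℂ ((LinearMap.ker S.toLinearMap).map (S - η • 1).toLinearMap) :=
      Module.Finite.map _ _
    exact isClosed_sup_fd _ _ hCclosed
  · -- finite codimension
    have hsup_top : LinearMap.range (S - η • 1).toLinearMap ⊔ F = ⊤ := by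
      rw [eq_top_iff]
      intro y _
      obtain ⟨v, hv⟩ := hsurjη y
      apply Submodule.mem_sup.2
      refine ⟨(S - η • 1) (v.1 : X), ⟨v.1, rfl⟩, (v.2 : X), v.2.2, ?_⟩
      rw [← hv, hΦηapp]
      simp [ContinuousLinearMap.sub_apply, ContinuousLinearMap.smul_apply,
        ContinuousLinearMap.one_apply]
    set g : F →ₗ[ℂ] (X ⧸ LinearMap.range (S - η • 1).toLinearMap) :=
      (LinearMap.range (S - η • 1).toLinearMap).mkQ.comp F.subtype with hg
    have hgsurj : Function.Surjective g := by
      intro z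
      obtain ⟨y, rfl⟩ := Submodule.mkQ_surjective _ z
      have : y ∈ LinearMap.range (S - η • 1).toLinearMap ⊔ F := by rw [hsup_top]; trivial
      obtain ⟨r, hr, fv, hfv, rfl⟩ := Submodule.mem_sup.1 this
      refine ⟨⟨fv, hfv⟩, ?_⟩
      rw [hg]
      simp only [LinearMap.comp_apply, Submodule.subtype_apply, Submodule.mkQ_apply]
      have hr0 : (LinearMap.range (S - η • 1).toLinearMap).mkQ r = 0 :=
        (Submodule.Quotient.mk_eq_zero _).2 hr
      have := map_add (LinearMap.range (S - η • 1).toLinearMap).mkQ r fv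
      rw [Submodule.mkQ_apply] at this
      rw [this, hr0, zero_add]
      rfl
    exact Module.Finite.of_surjective g hgsurj

theorem key_lemma (S : X →L[ℂ] X)
    (h1 : FiniteDimensional ℂ (LinearMap.ker S.toLinearMap))
    (h2 : IsClosed ((LinearMap.range S.toLinearMap : Submodule ℂ X) : Set X))
    (h3 : FiniteDimensional ℂ (X ⧸ LinearMap.range S.toLinearMap))
    (p : ℕ) (hp : LinearMap.ker (S^p).toLinearMap = LinearMap.ker (S^(p+1)).toLinearMap)
    (hcontra : ∀ η : ℂ, η ≠ 0 →
      FiniteDimensional ℂ (LinearMap.ker (S - η • 1).toLinearMap) →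
      IsClosed ((LinearMap.range (S - η • 1).toLinearMap : Submodule ℂ X) : Set X) →
      FiniteDimensional ℂ (X ⧸ LinearMap.range (S - η • 1).toLinearMap) →
      LinearMap.range (S - η • 1).toLinearMap ≠ ⊤ → LinearMap.ker (S - η • 1).toLinearMap ≠ ⊥) :
    Module.finrank ℂ (LinearMap.ker S.toLinearMap) = Module.finrank ℂ (X ⧸ LinearMap.range S.toLinearMap) := by
  classical
  -- ranges of powers are closed
  have hclosed_pow : ∀ n : ℕ, IsClosed ((LinearMap.range (S^n).toLinearMap : Submodule ℂ X) : Set X) := by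
    intro n
    induction n with
    | zero =>
      have : LinearMap.range (S^0).toLinearMap = ⊤ := by
        rw [pow_zero]
        exact LinearMap.range_eq_top.2 (fun x => ⟨x, rfl⟩)
      rw [this]
      exact isClosed_univ
    | succ n ih =>
      rw [range_pow_succ]
      exact map_isClosed S h1 h2 _ ih
  set M : Submodule ℂ X := LinearMap.range (S^p).toLinearMap with hM
  have hMclosed : IsClosed (M : Set X) := hclosed_pow p
  haveI : CompleteSpace M := hMclosed.completeSpace_coe
  have hmaps : ∀ x : M, S (x : X) ∈ M := by
    rintro ⟨x, y, rfl⟩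
    refine ⟨S y, ?_⟩
    show (S^p) (S y) = S ((S^p) y)
    rw [← pow_apply_succ, pow_apply_succ']
  set A : M →L[ℂ] M := (S.comp M.subtypeL).codRestrict M hmaps with hA
  have hAapp : ∀ x : M, (A x : X) = S (x : X) := fun x => rfl
  have hAker : LinearMap.ker A.toLinearMap = ⊥ := by
    rw [Submodule.eq_bot_iff]
    intro x hx
    have hx0 : S (x : X) = 0 := by
      have := congrArg Subtype.val (show A x = 0 from hx)
      simpa [hAapp] using this
    have : (x : X) = 0 := eq_zero_of_ker_inf_range S p hp x.2 hx0
    exact Subtype.ext this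
  have hArange_set : ((LinearMap.range A.toLinearMap : Submodule ℂ M) : Set M) =
      (Subtype.val) ⁻¹' ((LinearMap.range (S^(p+1)).toLinearMap : Submodule ℂ X) : Set X) := by
    ext a
    simp only [SetLike.mem_coe, Set.mem_preimage]
    constructor
    · rintro ⟨x, rfl⟩
      show (A x : X) ∈ (LinearMap.range (S^(p+1)).toLinearMap : Submodule ℂ X)
      rw [range_pow_succ, hAapp]
      exact Submodule.mem_map_of_mem x.2
    · intro ha
      have ha' : (a : X) ∈ (LinearMap.range (S^(p+1)).toLinearMap : Submodule ℂ X) := ha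
      rw [range_pow_succ] at ha'
      obtain ⟨x, hx, hxa⟩ := ha'
      exact ⟨⟨x, hx⟩, Subtype.ext hxa⟩
  have hArange_closed : IsClosed ((LinearMap.range A.toLinearMap : Submodule ℂ M) : Set M) := by
    rw [hArange_set]
    exact (hclosed_pow (p+1)).preimage continuous_subtype_val
  obtain ⟨c, hc, hbA⟩ := exists_bound_of_injective A hAker hArange_closed
  by_cases hsurj : LinearMap.range A.toLinearMap = ⊤
  · -- Case (i): finite descent, S is Weyl
    have hdesc : LinearMap.range (S^(p+1)).toLinearMap = LinearMap.range (S^p).toLinearMap := by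
      apply le_antisymm
      · rintro y ⟨x, rfl⟩
        refine ⟨S x, ?_⟩
        rw [ContinuousLinearMap.coe_coe, ContinuousLinearMap.coe_coe, ← pow_apply_succ, pow_apply_succ']
      · intro x hx
        obtain ⟨a, ha⟩ := LinearMap.range_eq_top.1 hsurj ⟨x, hx⟩
        have : S (a : X) = x := by
          have := congrArg Subtype.val ha
          simpa [hAapp] using this
        rw [range_pow_succ]
        exact ⟨(a : X), a.2, this⟩
    set N : Submodule ℂ X := LinearMap.ker (S^p).toLinearMap with hN
    haveI : FiniteDimensional ℂ N := fd_ker_pow S h1 p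
    have hNM_top : N ⊔ M = ⊤ := by
      rw [eq_top_iff]
      intro x _
      have hx : (S^p) x ∈ LinearMap.range (S^(p+p)).toLinearMap := by
        rw [range_pow_stab S p hdesc p]
        exact ⟨x, rfl⟩
      obtain ⟨y, hy⟩ := hx
      have hpp : (S^(p+p)) y = (S^p) ((S^p) y) := by
        rw [pow_add]; rfl
      have hmem1 : x - (S^p) y ∈ N := by
        simp only [hN, LinearMap.mem_ker, map_sub, ContinuousLinearMap.coe_coe]
        rw [← hpp]; exact sub_eq_zero.2 hy.symm
      have hmem2 : (S^p) y ∈ M := ⟨y, rfl⟩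
      have : x = (x - (S^p) y) + (S^p) y := by abel
      rw [this]
      exact Submodule.add_mem_sup hmem1 hmem2
    have hNM_bot : N ⊓ M = ⊥ := by
      rw [Submodule.eq_bot_iff]
      rintro x ⟨hxN, y, rfl⟩
      have h0 : (S^(p+p)) y = 0 := by
        rw [pow_add]
        exact hxN
      have : y ∈ LinearMap.ker (S^p).toLinearMap := by
        rw [← ker_pow_stab S p hp p]
        exact h0
      exact this
    have hkerS_le_N : LinearMap.ker S.toLinearMap ≤ N := by
      intro x hx
      have := ker_le_ker_pow_succ S p hx
      rw [← hp] at this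
      exact this
    have hSN : ∀ x ∈ N, S x ∈ N := by
      intro x hx
      simp only [hN, LinearMap.mem_ker, ContinuousLinearMap.coe_coe] at *
      rw [← pow_apply_succ, pow_apply_succ', hx, map_zero]
    set R : Submodule ℂ X := LinearMap.range S.toLinearMap with hR
    have hMR : M ≤ R := by
      intro x hx
      rw [hM, ← hdesc] at hx
      obtain ⟨y, rfl⟩ := hx
      exact ⟨(S^p) y, (pow_apply_succ' S p y).symm⟩
    have hRN_top : R ⊔ N = ⊤ := by
      rw [eq_top_iff, ← hNM_top]
      apply sup_le
      · exact le_sup_right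
      · exact le_trans hMR le_sup_left
    have hRinfN : R ⊓ N = Submodule.map S.toLinearMap N := by
      apply le_antisymm
      · rintro x ⟨⟨y, rfl⟩, hxN⟩
        have hy : y ∈ N ⊔ M := by rw [hNM_top]; trivial
        obtain ⟨n, hn, m, hm, rfl⟩ := Submodule.mem_sup.1 hy
        have hSm : S m ∈ M := by
          rw [hM, ← hdesc, range_pow_succ]
          exact Submodule.mem_map_of_mem hm
        have hSn : S n ∈ N := hSN n hn
        have hSmN : S m ∈ N := by
          have : S m = S (n + m) - S n := by rw [map_add]; abel
          rw [this]
          exact Submodule.sub_mem N hxN hSn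
        have : S m ∈ N ⊓ M := ⟨hSmN, hSm⟩
        rw [hNM_bot, Submodule.mem_bot] at this
        rw [map_add, ContinuousLinearMap.coe_coe, this, add_zero]
        exact Submodule.mem_map_of_mem hn
      · apply le_inf
        · rintro x ⟨n, _, rfl⟩
          exact ⟨n, rfl⟩
        · rintro x ⟨n, hn, rfl⟩
          exact hSN n hn
    set g : N →ₗ[ℂ] (X ⧸ R) := R.mkQ.comp N.subtype with hg
    have hgsurj : Function.Surjective g := by
      intro z
      obtain ⟨y, rfl⟩ := Submodule.mkQ_surjective _ z
      have hy : y ∈ R ⊔ N := by rw [hRN_top]; trivial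
      obtain ⟨r, hr, n, hn, rfl⟩ := Submodule.mem_sup.1 hy
      refine ⟨⟨n, hn⟩, ?_⟩
      have hr0 : R.mkQ r = 0 := (Submodule.Quotient.mk_eq_zero _).2 hr
      rw [hg]
      simp only [LinearMap.comp_apply, Submodule.subtype_apply]
      rw [map_add, hr0, zero_add]
    have hgker : LinearMap.ker g = Submodule.comap N.subtype (Submodule.map S.toLinearMap N) := by
      ext a
      simp only [LinearMap.mem_ker, hg, LinearMap.comp_apply, Submodule.subtype_apply,
        Submodule.mem_comap, ContinuousLinearMap.coe_coe]
      rw [Submodule.mkQ_apply, Submodule.Quotient.mk_eq_zero]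
      constructor
      · intro haR
        have : (a : X) ∈ R ⊓ N := ⟨haR, a.2⟩
        rw [hRinfN] at this
        exact this
      · intro hmap
        rw [← hRinfN] at hmap
        exact hmap.1
    set f0 : N →ₗ[ℂ] N := (S : X →ₗ[ℂ] X).restrict hSN with hf0
    have hker_f0 : LinearMap.ker f0 = Submodule.comap N.subtype (LinearMap.ker S.toLinearMap) := by
      ext a
      simp only [LinearMap.mem_ker, Submodule.mem_comap, Submodule.subtype_apply, ContinuousLinearMap.coe_coe]
      constructor
      · intro h
        have := congrArg Subtype.val h
        simpa [hf0, LinearMap.restrict_apply] using this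
      · intro h
        apply Subtype.ext
        simpa [hf0, LinearMap.restrict_apply] using h
    have hmap_range_f0 : Submodule.map N.subtype (LinearMap.range f0) = Submodule.map S.toLinearMap N := by
      ext y
      simp only [Submodule.mem_map, LinearMap.mem_range]
      constructor
      · rintro ⟨a, ⟨b, rfl⟩, rfl⟩
        exact ⟨(b : X), b.2, by simp [hf0, LinearMap.restrict_apply]⟩
      · rintro ⟨x, hx, rfl⟩
        exact ⟨f0 ⟨x, hx⟩, ⟨⟨x, hx⟩, rfl⟩, by simp [hf0, LinearMap.restrict_apply]⟩
    -- finrank computations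
    have e1 := LinearMap.quotKerEquivOfSurjective g hgsurj
    have hq1 : Module.finrank ℂ (X ⧸ R) = Module.finrank ℂ (N ⧸ LinearMap.ker g) :=
      (LinearEquiv.finrank_eq e1).symm
    have hq2 : Module.finrank ℂ (N ⧸ LinearMap.ker g) + Module.finrank ℂ (LinearMap.ker g)
        = Module.finrank ℂ N := Submodule.finrank_quotient_add_finrank _
    have hq3 : Module.finrank ℂ (LinearMap.range f0) + Module.finrank ℂ (LinearMap.ker f0)
        = Module.finrank ℂ N := LinearMap.finrank_range_add_finrank_ker f0
    have hkf0 : Module.finrank ℂ (LinearMap.ker f0) = Module.finrank ℂ (LinearMap.ker S.toLinearMap) := by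
      rw [hker_f0]
      exact LinearEquiv.finrank_eq (Submodule.comapSubtypeEquivOfLe hkerS_le_N)
    have hrf0 : Module.finrank ℂ (LinearMap.range f0)
        = Module.finrank ℂ (Submodule.map S.toLinearMap N) := by
      rw [← hmap_range_f0]
      exact (Submodule.finrank_map_subtype_eq N _).symm
    have hkg : Module.finrank ℂ (LinearMap.ker g) = Module.finrank ℂ (Submodule.map S.toLinearMap N) := by
      rw [hgker]
      have hle : Submodule.map S.toLinearMap N ≤ N := fun x => by
        rintro ⟨n, hn, rfl⟩
        exact hSN n hn
      exact LinearEquiv.finrank_eq (Submodule.comapSubtypeEquivOfLe hle)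
    omega
  · -- Case (ii): contradiction
    exfalso
    obtain ⟨ε, hε, hstab⟩ := fredholm_stability S h1 h2 h3
    set r : ℝ := min (c/3) (ε/2) with hr
    have hr0 : 0 < r := lt_min (by linarith) (by linarith)
    have hrc : r ≤ c/3 := min_le_left _ _
    have hrε : r < ε := lt_of_le_of_lt (min_le_right _ _) (by linarith)
    set η : ℂ := (r : ℂ) with hη
    have hηne : η ≠ 0 := by
      simp only [hη, ne_eq, Complex.ofReal_eq_zero]
      exact hr0.ne'
    have hηnorm : ‖η‖ = r := by
      rw [hη, Complex.norm_real, Real.norm_eq_abs, abs_of_pos hr0]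
    obtain ⟨hclosedη, hfdη⟩ := hstab η (by rw [hηnorm]; exact hrε)
    have hSη : ∀ x, (S - η • 1) x = S x - η • x := by
      intro x
      simp [ContinuousLinearMap.sub_apply, ContinuousLinearMap.smul_apply,
        ContinuousLinearMap.one_apply]
    have hkerη : LinearMap.ker (S - η • 1).toLinearMap = ⊥ := by
      rw [Submodule.eq_bot_iff]
      intro x hx
      have hSx : S x = η • x := by
        have h0 : S x - η • x = 0 := by rw [← hSη]; exact hx
        exact sub_eq_zero.1 h0
      have hxn : ∀ n : ℕ, (S^n) x = η^n • x := by
        intro n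
        induction n with
        | zero => simp
        | succ n ih =>
          rw [pow_apply_succ, hSx, map_smul, ih, smul_smul, ← pow_succ']
      have hxM : x ∈ M := by
        refine ⟨(η^p)⁻¹ • x, ?_⟩
        rw [map_smul, ContinuousLinearMap.coe_coe, hxn p, smul_smul, inv_mul_cancel₀ (pow_ne_zero p hηne), one_smul]
      have hbound := hbA ⟨x, hxM⟩
      have hAx : (A ⟨x, hxM⟩ : X) = η • x := by
        rw [hAapp]
        exact hSx
      have hnorms : ‖A ⟨x, hxM⟩‖ = r * ‖x‖ := by
        rw [show ‖A ⟨x, hxM⟩‖ = ‖(A ⟨x, hxM⟩ : X)‖ from rfl, hAx, norm_smul, hηnorm]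
      have hnormx : ‖(⟨x, hxM⟩ : M)‖ = ‖x‖ := rfl
      rw [hnorms, hnormx] at hbound
      have hx0 : ‖x‖ = 0 := by nlinarith [norm_nonneg x]
      exact norm_eq_zero.1 hx0
    haveI hfdkerη : FiniteDimensional ℂ (LinearMap.ker (S - η • 1).toLinearMap) := by
      rw [hkerη]; infer_instance
    have hcr : (0:ℝ) < c - r := by linarith
    have hne_top : LinearMap.range (S - η • 1).toLinearMap ≠ ⊤ := by
      intro htop
      apply hsurj
      have hmapsη : ∀ x : M, (S - η • 1) (x : X) ∈ M := by
        intro x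
        rw [hSη]
        exact Submodule.sub_mem M (hmaps x) (Submodule.smul_mem M η x.2)
      set Aη : M →L[ℂ] M := ((S - η • 1).comp M.subtypeL).codRestrict M hmapsη with hAη
      have hAηapp : ∀ x : M, (Aη x : X) = S (x:X) - η • (x:X) := by
        intro x
        show (S - η • 1) (x : X) = _
        rw [hSη]
      have hAηbb : ∀ x : M, (c - r) * ‖x‖ ≤ ‖Aη x‖ := by
        intro x
        have h1 : ‖Aη x‖ = ‖S (x:X) - η • (x:X)‖ := by
          rw [show ‖Aη x‖ = ‖(Aη x : X)‖ from rfl, hAηapp]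
        have h2 : ‖S (x:X)‖ - ‖η • (x:X)‖ ≤ ‖S (x:X) - η • (x:X)‖ := norm_sub_norm_le _ _
        have h3 : c * ‖x‖ ≤ ‖S (x:X)‖ := by
          have := hbA x
          rwa [show ‖A x‖ = ‖S (x:X)‖ from rfl] at this
        have h4 : ‖η • (x:X)‖ = r * ‖x‖ := by
          rw [norm_smul, hηnorm]
          rfl
        rw [h1]
        have hxnn : (0:ℝ) ≤ ‖x‖ := norm_nonneg x
        nlinarith
      have hAηker : LinearMap.ker Aη.toLinearMap = ⊥ := by
        rw [Submodule.eq_bot_iff]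
        intro x hx
        have h0 : ‖Aη x‖ = 0 := by rw [show Aη x = 0 from hx, norm_zero]
        have h1 := hAηbb x
        have hx0 : ‖x‖ = 0 := by nlinarith [norm_nonneg x]
        exact norm_eq_zero.1 hx0
      have hAηsurj : LinearMap.range Aη.toLinearMap = ⊤ := by
        rw [LinearMap.range_eq_top]
        intro y
        obtain ⟨z, hz⟩ := y.2
        obtain ⟨w, hw⟩ := LinearMap.range_eq_top.1 htop z
        have hwM : (S^p) w ∈ M := ⟨w, rfl⟩
        refine ⟨⟨(S^p) w, hwM⟩, ?_⟩
        apply Subtype.ext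
        show (S - η • 1) ((S^p) w) = (y : X)
        rw [hSη]
        have hps : S ((S^p) w) = (S^p) (S w) := by
          rw [← pow_apply_succ', pow_apply_succ]
        have hcomm2 : S ((S^p) w) - η • (S^p) w = (S^p) (S w - η • w) := by
          rw [map_sub, map_smul, hps]
        rw [hcomm2]
        have hw' : S w - η • w = z := by rw [← hSη]; exact hw
        rw [hw']; exact hz
      set eA := ContinuousLinearEquiv.ofBijective Aη hAηker hAηsurj with heA
      set Es' : M →L[ℂ] M := (eA.symm : M →L[ℂ] M) with hEs'
      have hAηEs' : ∀ y : M, Aη (Es' y) = y := fun y => eA.apply_symm_apply y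
      have hEs'bound : ∀ y : M, ‖Es' y‖ ≤ (c - r)⁻¹ * ‖y‖ := by
        intro y
        have h0 := hAηbb (Es' y)
        rw [hAηEs' y] at h0
        rw [inv_mul_eq_div, le_div_iff₀ hcr]
        linarith
      have hEs'norm : ‖η • Es'‖ < 1 := by
        have hb : ‖η • Es'‖ ≤ r * (c - r)⁻¹ := by
          apply ContinuousLinearMap.opNorm_le_bound _ (by positivity)
          intro v
          rw [ContinuousLinearMap.smul_apply, norm_smul, hηnorm]
          calc r * ‖Es' v‖ ≤ r * ((c - r)⁻¹ * ‖v‖) :=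
                mul_le_mul_of_nonneg_left (hEs'bound v) hr0.le
          _ = r * (c - r)⁻¹ * ‖v‖ := by ring
        have h1 : r * (c - r)⁻¹ < 1 := by
          rw [← div_eq_mul_inv]
          exact (div_lt_one hcr).2 (by linarith)
        linarith
      have hnegnorm : ‖-(η • Es')‖ < 1 := lt_of_eq_of_lt (norm_neg (η • Es')) hEs'norm
      set u' := Units.oneSub (-(η • Es')) hnegnorm with hu'
      have hu'val : (u' : M →L[ℂ] M) = 1 + η • Es' := sub_neg_eq_add 1 (η • Es')
      have hAdecomp : ∀ v : M, A v = Aη v + η • v := by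
        intro v
        apply Subtype.ext
        rw [hAapp]
        have : ((Aη v + η • v : M) : X) = (S (v:X) - η • (v:X)) + η • (v:X) := by
          rw [Submodule.coe_add, Submodule.coe_smul, hAηapp]
        rw [this]
        abel
      rw [LinearMap.range_eq_top]
      intro y
      set w : M := (↑u'⁻¹ : M →L[ℂ] M) y with hwdef
      refine ⟨Es' w, ?_⟩
      rw [ContinuousLinearMap.coe_coe, hAdecomp, hAηEs' w]
      have h2 : w + η • Es' w = (u' : M →L[ℂ] M) w := by
        rw [hu'val]
        rw [ContinuousLinearMap.add_apply, ContinuousLinearMap.one_apply,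
          ContinuousLinearMap.smul_apply]
      rw [h2, hwdef]
      calc (u' : M →L[ℂ] M) ((↑u'⁻¹ : M →L[ℂ] M) y)
          = ((↑u' * ↑u'⁻¹ : M →L[ℂ] M)) y := rfl
      _ = (1 : M →L[ℂ] M) y := by rw [u'.mul_inv]
      _ = y := rfl
    exact hcontra η hηne hfdkerη hclosedη hfdη hne_top hkerη

end AuxProof


section GlueProof
set_option linter.unusedSectionVars false
set_option maxHeartbeats 1000000

variable {X : Type*} [NormedAddCommGroup X] [NormedSpace ℂ X] [CompleteSpace X]

theorem leftPoles_ker_ne_bot (T : X →L[ℂ] X) {l : ℂ} (hl : l ∈ leftPoles T) :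
    LinearMap.ker (T - l • 1).toLinearMap ≠ ⊥ := by
  obtain ⟨hla, p, hp, hmin, hcl⟩ := hl
  intro hker
  have hp0 : p = 0 := by
    by_contra hne
    apply hmin 0 (Nat.pos_of_ne_zero hne)
    have h0 : LinearMap.ker ((T - l • 1) ^ 0).toLinearMap = ⊥ := by
      rw [pow_zero]
      rw [Submodule.eq_bot_iff]
      intro x hx
      exact hx
    rw [h0, pow_one, hker]
  subst hp0
  rw [zero_add, pow_one] at hcl
  obtain ⟨c, hc, hb⟩ := exists_bound_of_injective (T - l • 1) hker hcl
  exact hla ⟨c, hc, hb⟩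

theorem isWeyl_of_ab_e (T : X →L[ℂ] X) (H : spectrum ℂ T \ sigma_e T = leftPoles0 T)
    {l : ℂ} (hF : IsFredholm (T - l • 1)) : IsWeyl (T - l • 1) := by
  by_cases hσ : l ∈ spectrum ℂ T
  · have hle : l ∉ sigma_e T := by
      simp only [sigma_e, Set.mem_setOf_eq, not_not]
      exact hF
    have hl : l ∈ leftPoles0 T := by rw [← H]; exact ⟨hσ, hle⟩
    obtain ⟨⟨hla, p, hp, hmin, hcl⟩, hfin⟩ := hl
    refine ⟨hF, ?_⟩
    apply key_lemma (T - l • 1) hF.1 hF.2.1 hF.2.2 p hp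
    intro η hηne hfk hclr hfq hnt
    have heq : (T - l • 1) - η • 1 = T - (l + η) • 1 := by
      rw [add_smul]
      abel
    rw [heq] at hfk hclr hfq hnt ⊢
    have halg : (algebraMap ℂ (X →L[ℂ] X)) (l + η) = (l + η) • 1 :=
      Algebra.algebraMap_eq_smul_one (l + η)
    have hμσ : (l + η) ∈ spectrum ℂ T := by
      rw [spectrum.mem_iff]
      intro hunit
      apply hnt
      obtain ⟨u, hu⟩ := hunit
      rw [eq_top_iff]
      intro y _
      refine ⟨-((↑u⁻¹ : X →L[ℂ] X) y), ?_⟩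
      have huy : (↑u : X →L[ℂ] X) ((↑u⁻¹ : X →L[ℂ] X) y) = y := by
        calc (↑u : X →L[ℂ] X) ((↑u⁻¹ : X →L[ℂ] X) y)
            = ((↑u * ↑u⁻¹ : X →L[ℂ] X)) y := rfl
        _ = (1 : X →L[ℂ] X) y := by rw [u.mul_inv]
        _ = y := rfl
      have hval : (↑u : X →L[ℂ] X) = (l + η) • 1 - T := by rw [hu, halg]
      rw [map_neg, ContinuousLinearMap.coe_coe]
      have : (T - (l + η) • 1) ((↑u⁻¹ : X →L[ℂ] X) y)
          = -((↑u : X →L[ℂ] X) ((↑u⁻¹ : X →L[ℂ] X) y)) := by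
        rw [hval]
        simp only [ContinuousLinearMap.sub_apply, ContinuousLinearMap.smul_apply,
          ContinuousLinearMap.one_apply]
        abel
      rw [this, neg_neg, huy]
    have hμe : (l + η) ∉ sigma_e T := by
      simp only [sigma_e, Set.mem_setOf_eq, not_not]
      exact ⟨hfk, hclr, hfq⟩
    have hμP : (l + η) ∈ leftPoles0 T := by rw [← H]; exact ⟨hμσ, hμe⟩
    exact leftPoles_ker_ne_bot T hμP.1
  · have hunit : IsUnit ((algebraMap ℂ (X →L[ℂ] X)) l - T) := spectrum.notMem_iff.1 hσ
    obtain ⟨u, hu⟩ := hunit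
    have halg : (algebraMap ℂ (X →L[ℂ] X)) l = l • 1 := Algebra.algebraMap_eq_smul_one l
    have hval : (↑u : X →L[ℂ] X) = l • 1 - T := by rw [hu, halg]
    have happ : ∀ x, (T - l • 1) x = -((↑u : X →L[ℂ] X) x) := by
      intro x
      rw [hval]
      simp only [ContinuousLinearMap.sub_apply, ContinuousLinearMap.smul_apply,
        ContinuousLinearMap.one_apply]
      abel
    have hinj : LinearMap.ker (T - l • 1).toLinearMap = ⊥ := by
      rw [Submodule.eq_bot_iff]
      intro x hx
      have h0 : (↑u : X →L[ℂ] X) x = 0 := by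
        have := happ x
        rw [show (T - l • 1) x = 0 from hx] at this
        rw [← neg_neg ((↑u : X →L[ℂ] X) x), ← this, neg_zero]
      calc x = ((↑u⁻¹ * ↑u : X →L[ℂ] X)) x := by rw [u.inv_mul]; rfl
      _ = (↑u⁻¹ : X →L[ℂ] X) ((↑u : X →L[ℂ] X) x) := rfl
      _ = 0 := by rw [h0, map_zero]
    have hsurj : LinearMap.range (T - l • 1).toLinearMap = ⊤ := by
      rw [eq_top_iff]
      intro y _
      refine ⟨-((↑u⁻¹ : X →L[ℂ] X) y), ?_⟩
      rw [map_neg, ContinuousLinearMap.coe_coe, happ]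
      have huy : (↑u : X →L[ℂ] X) ((↑u⁻¹ : X →L[ℂ] X) y) = y := by
        calc (↑u : X →L[ℂ] X) ((↑u⁻¹ : X →L[ℂ] X) y)
            = ((↑u * ↑u⁻¹ : X →L[ℂ] X)) y := rfl
        _ = (1 : X →L[ℂ] X) y := by rw [u.mul_inv]
        _ = y := rfl
      rw [huy, neg_neg]
    haveI hsub : Subsingleton (X ⧸ LinearMap.range (T - l • 1).toLinearMap) := by
      rw [Submodule.Quotient.subsingleton_iff]
      exact hsurj
    haveI hfq : FiniteDimensional ℂ (X ⧸ LinearMap.range (T - l • 1).toLinearMap) :=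
      Module.Finite.of_surjective (0 : (⊥ : Submodule ℂ X) →ₗ[ℂ] (X ⧸ LinearMap.range (T - l • 1).toLinearMap))
        (fun z => ⟨0, Subsingleton.elim _ _⟩)
    refine ⟨⟨?_, ?_, hfq⟩, ?_⟩
    · rw [hinj]; infer_instance
    · rw [hsurj]
      exact isClosed_univ
    · rw [hinj, finrank_bot, Module.finrank_zero_of_subsingleton]

end GlueProof

/-- `T ∈ (ab_e)` iff `T ∈ (ab)` and `σ_e(T) = σ_w(T)`. -/
theorem stmt10 (T : X →L[ℂ] X) :
    spectrum ℂ T \ sigma_e T = leftPoles0 T ↔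
      spectrum ℂ T \ sigma_w T = leftPoles0 T ∧ sigma_e T = sigma_w T := by
  constructor
  · intro H
    have hew : sigma_e T = sigma_w T := by
      ext l
      simp only [sigma_e, sigma_w, Set.mem_setOf_eq]
      constructor
      · intro h hW
        exact h hW.1
      · intro h
        intro hF
        exact h (isWeyl_of_ab_e T H hF)
    exact ⟨by rw [← hew]; exact H, hew⟩
  · rintro ⟨h1, h2⟩
    rw [h2]
    exact h1
end

section
/- A bounded linear operator T on a complex Banach space belongs to class (aw_e) if and only if T belongs to class (aw) and σ_e(T) = σ_w(T). -/
open Filter Topology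

variable {X : Type*} [NormedAddCommGroup X] [NormedSpace ℂ X] [CompleteSpace X]

set_option maxHeartbeats 1000000 in
lemma fredholm_stability_s14 (S : X →L[ℂ] X) (hS : IsFredholm S) :
    ∃ ε > 0, ∀ S' : X →L[ℂ] X, ‖S' - S‖ < ε → IsFredholm S' ∧
      Module.finrank ℂ (LinearMap.ker S'.toLinearMap) + Module.finrank ℂ (X ⧸ LinearMap.range S.toLinearMap)
        = Module.finrank ℂ (X ⧸ LinearMap.range S'.toLinearMap) + Module.finrank ℂ (LinearMap.ker S.toLinearMap) := by
  obtain ⟨hKfd, hRc, hQfd⟩ := hS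
  haveI : FiniteDimensional ℂ (LinearMap.ker S.toLinearMap) := hKfd
  haveI : FiniteDimensional ℂ (X ⧸ LinearMap.range S.toLinearMap) := hQfd
  -- closed complement M of the kernel
  obtain ⟨M, hMc, hKM⟩ :=
    (Submodule.ClosedComplemented.of_finiteDimensional (LinearMap.ker S.toLinearMap)).exists_isClosed_isCompl
  -- continuous projection Q onto the range
  obtain ⟨Q, hQ⟩ := Submodule.ClosedComplemented.of_quotient_finiteDimensional hRc
  set N : Submodule ℂ X := LinearMap.ker Q.toLinearMap with hN
  have hRN : IsCompl (LinearMap.range S.toLinearMap) N := LinearMap.isCompl_of_proj hQ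
  have eN : (X ⧸ LinearMap.range S.toLinearMap) ≃ₗ[ℂ] N :=
    (LinearMap.range S.toLinearMap).quotientEquivOfIsCompl N hRN
  haveI : FiniteDimensional ℂ N := eN.finiteDimensional
  have hNc : IsClosed (N : Set X) := Submodule.closed_of_finiteDimensional N
  haveI : CompleteSpace M := hMc.completeSpace_coe
  haveI : CompleteSpace (LinearMap.range S.toLinearMap) := hRc.completeSpace_coe
  -- Q fixes the range
  have hQfix : ∀ x (hx : x ∈ LinearMap.range S.toLinearMap), ((Q x : X)) = x := fun x hx =>
    congrArg Subtype.val (hQ ⟨x, hx⟩)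
  have hKMdisj : ∀ x, x ∈ LinearMap.ker S.toLinearMap → x ∈ M → x = 0 := fun x h1 h2 =>
    (Submodule.disjoint_def.mp hKM.disjoint) x h1 h2
  have hdec : ∀ x : X, ∃ (k : LinearMap.ker S.toLinearMap) (m : M), (k : X) + (m : X) = x := by
    intro x
    have hx : x ∈ LinearMap.ker S.toLinearMap ⊔ M := by rw [hKM.sup_eq_top]; trivial
    exact Submodule.mem_sup'.mp hx
  -- the isomorphism M ≃ range S induced by S
  set St : M →L[ℂ] LinearMap.range S.toLinearMap := Q.comp (S.comp M.subtypeL) with hSt_def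
  have hSt : ∀ m : M, ((St m : X)) = S m := fun m =>
    hQfix (S m) (LinearMap.mem_range_self _ _)
  have hStinj : Function.Injective St := by
    rw [injective_iff_map_eq_zero]
    intro m hm
    have h1 : ((St m : X)) = 0 := by rw [hm]; rfl
    rw [hSt] at h1
    exact Subtype.ext (hKMdisj m (LinearMap.mem_ker.mpr h1) m.2)
  have hStsurj : Function.Surjective St := by
    rintro ⟨r, hr⟩
    obtain ⟨x, hx⟩ := hr
    obtain ⟨k, m, hkm⟩ := hdec x
    refine ⟨m, Subtype.ext ?_⟩
    rw [hSt]
    have hk0 : S (k : X) = 0 := k.2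
    calc S (m : X) = S ((k : X) + (m : X)) := by rw [map_add, hk0, zero_add]
    _ = r := by rw [hkm]; exact hx
  set e : M ≃L[ℂ] LinearMap.range S.toLinearMap :=
    ContinuousLinearEquiv.ofBijective St (LinearMap.ker_eq_bot.mpr hStinj)
      (LinearMap.range_eq_top.mpr hStsurj) with he_def
  have he : ∀ m : M, e m = St m := fun m => by
    rw [he_def, ContinuousLinearEquiv.coeFn_ofBijective]
  set Econt : X →L[ℂ] M := e.symm.toContinuousLinearMap.comp Q with hEcont_def
  refine ⟨(1 + ‖Econt‖)⁻¹, by positivity, ?_⟩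
  intro S' hS'
  -- the perturbation D
  set D : M →L[ℂ] M := Econt.comp ((S' - S).comp M.subtypeL) with hD_def
  have hDnorm : ‖D‖ < 1 := by
    have h1 : ‖D‖ ≤ ‖Econt‖ * (‖S' - S‖ * ‖M.subtypeL‖) :=
      le_trans (ContinuousLinearMap.opNorm_comp_le Econt ((S' - S).comp M.subtypeL))
        (mul_le_mul_of_nonneg_left (ContinuousLinearMap.opNorm_comp_le (S' - S) M.subtypeL)
          (norm_nonneg Econt))
    have h2 : ‖M.subtypeL‖ ≤ 1 := Submodule.norm_subtypeL_le M
    have h3 : (0:ℝ) < 1 + ‖Econt‖ := by positivity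
    have h4 : ‖Econt‖ * ‖S' - S‖ < 1 := by
      rcases eq_or_lt_of_le (norm_nonneg Econt) with hE | hE
      · rw [← hE]; simpa using one_pos
      · calc ‖Econt‖ * ‖S' - S‖ < ‖Econt‖ * (1 + ‖Econt‖)⁻¹ := by
              exact mul_lt_mul_of_pos_left hS' hE
        _ < 1 := by
              rw [← div_eq_mul_inv, div_lt_one h3]; linarith
    calc ‖D‖ ≤ ‖Econt‖ * (‖S' - S‖ * ‖M.subtypeL‖) := h1
    _ ≤ ‖Econt‖ * ‖S' - S‖ := by
          have h5 : ‖S' - S‖ * ‖M.subtypeL‖ ≤ ‖S' - S‖ := by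
            nlinarith [norm_nonneg (S' - S), norm_nonneg M.subtypeL]
          exact mul_le_mul_of_nonneg_left h5 (norm_nonneg Econt)
    _ < 1 := h4
  have hDnorm' : ‖-D‖ < 1 := by rw [norm_neg D]; exact hDnorm
  set u : (M →L[ℂ] M)ˣ := Units.oneSub (-D) hDnorm' with hu_def
  have hu : (u : M →L[ℂ] M) = 1 + D := by
    rw [hu_def, Units.val_oneSub, sub_neg_eq_add]
  set A : M →L[ℂ] LinearMap.range S.toLinearMap := Q.comp (S'.comp M.subtypeL) with hA_def
  have hAapp : ∀ m : M, A m = Q (S' (m : X)) := fun _ => rfl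
  have hA : ∀ m : M, e.symm (A m) = m + D m := by
    intro m
    have h1 : A m = St m + Q ((S' - S) (m : X)) := by
      rw [hAapp]
      have : St m = Q (S (m : X)) := rfl
      rw [this, ← map_add]
      congr 1
      simp
    rw [h1, map_add]
    have h2 : e.symm (St m) = m := by rw [← he]; exact e.symm_apply_apply m
    rw [h2]
    rfl
  have hAinj : Function.Injective A := by
    rw [injective_iff_map_eq_zero]
    intro m hm
    have h3 : m + D m = 0 := by rw [← hA m, hm, map_zero]
    have h4 : ((u : M →L[ℂ] M) : M → M) m = 0 := by rw [hu]; simpa using h3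
    have h5 : ((u⁻¹ : (M →L[ℂ] M)ˣ) : M →L[ℂ] M) (((u : M →L[ℂ] M)) m) = m := by
      have h6 : ((u⁻¹ : (M →L[ℂ] M)ˣ) : M →L[ℂ] M) * (u : M →L[ℂ] M) = 1 := u.inv_mul
      calc ((u⁻¹ : (M →L[ℂ] M)ˣ) : M →L[ℂ] M) (((u : M →L[ℂ] M)) m)
          = (((u⁻¹ : (M →L[ℂ] M)ˣ) : M →L[ℂ] M) * (u : M →L[ℂ] M)) m := rfl
      _ = m := by rw [h6]; rfl
    rw [h4, map_zero] at h5
    exact h5.symm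
  have hAsurj : Function.Surjective A := by
    intro r
    refine ⟨((u⁻¹ : (M →L[ℂ] M)ˣ) : M →L[ℂ] M) (e.symm r), e.symm.injective ?_⟩
    rw [hA]
    have h6 : (u : M →L[ℂ] M) * ((u⁻¹ : (M →L[ℂ] M)ˣ) : M →L[ℂ] M) = 1 := u.mul_inv
    calc ((u⁻¹ : (M →L[ℂ] M)ˣ) : M →L[ℂ] M) (e.symm r)
          + D (((u⁻¹ : (M →L[ℂ] M)ˣ) : M →L[ℂ] M) (e.symm r))
        = ((u : M →L[ℂ] M) * ((u⁻¹ : (M →L[ℂ] M)ˣ) : M →L[ℂ] M)) (e.symm r) := by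
          rw [hu]; rfl
    _ = e.symm r := by rw [h6]; rfl
  set eA : M ≃L[ℂ] LinearMap.range S.toLinearMap :=
    ContinuousLinearEquiv.ofBijective A (LinearMap.ker_eq_bot.mpr hAinj)
      (LinearMap.range_eq_top.mpr hAsurj) with heA_def
  have heA : ∀ m : M, eA m = A m := fun m => by
    rw [heA_def, ContinuousLinearEquiv.coeFn_ofBijective]
  have heAsymm : ∀ m : M, eA.symm (A m) = m := fun m => by
    rw [← heA]; exact eA.symm_apply_apply m
  have heAsymm' : ∀ r : LinearMap.range S.toLinearMap, A (eA.symm r) = r := fun r => by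
    rw [← heA]; exact eA.apply_symm_apply r
  -- the finite-dimensional "Schur complement" data
  set B1 : (LinearMap.ker S.toLinearMap) →L[ℂ] M :=
    eA.symm.toContinuousLinearMap.comp (Q.comp (S'.comp (LinearMap.ker S.toLinearMap).subtypeL))
    with hB1_def
  have hB1 : ∀ k : LinearMap.ker S.toLinearMap, B1 k = eA.symm (Q (S' (k : X))) := fun _ => rfl
  set ψ : (LinearMap.ker S.toLinearMap) →L[ℂ] X := (LinearMap.ker S.toLinearMap).subtypeL - M.subtypeL.comp B1
    with hψ_def
  have hψ : ∀ k : LinearMap.ker S.toLinearMap, ψ k = (k : X) - (eA.symm (Q (S' (k : X))) : X) :=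
    fun _ => rfl
  set F : (LinearMap.ker S.toLinearMap) →L[ℂ] X := S'.comp ψ with hF_def
  have hF : ∀ k : LinearMap.ker S.toLinearMap, F k = S' (ψ k) := fun _ => rfl
  have hQF : ∀ k : LinearMap.ker S.toLinearMap, Q (F k) = 0 := by
    intro k
    rw [hF, hψ, map_sub, map_sub]
    have h7 : Q (S' ((eA.symm (Q (S' (k : X))) : M) : X)) = Q (S' (k : X)) := by
      rw [← hAapp, heAsymm']
    rw [h7, sub_self]
  have hFN : ∀ k : LinearMap.ker S.toLinearMap, F k ∈ N := fun k => LinearMap.mem_ker.mpr (hQF k)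
  have hψinj : Function.Injective ψ := by
    rw [injective_iff_map_eq_zero]
    intro k hk
    rw [hψ] at hk
    have h7 : (k : X) = ((eA.symm (Q (S' (k : X))) : M) : X) := by
      rw [sub_eq_zero] at hk; exact hk
    have h8 : (k : X) ∈ M := h7 ▸ (eA.symm (Q (S' (k : X)))).2
    exact Subtype.ext (hKMdisj (k : X) k.2 h8)
  -- bounded below on M
  have hbbM : ∀ m : M, ‖m‖ ≤ (‖eA.symm.toContinuousLinearMap‖ * ‖Q‖) * ‖S' (m : X)‖ := by
    intro m
    have h7 : m = eA.symm (Q (S' (m : X))) := by rw [← hAapp, heAsymm]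
    calc ‖m‖ = ‖eA.symm (Q (S' (m : X)))‖ := by rw [← h7]
    _ = ‖eA.symm.toContinuousLinearMap (Q (S' (m : X)))‖ := rfl
    _ ≤ ‖eA.symm.toContinuousLinearMap‖ * ‖Q (S' (m : X))‖ :=
        ContinuousLinearMap.le_opNorm eA.symm.toContinuousLinearMap (Q (S' (m : X)))
    _ ≤ ‖eA.symm.toContinuousLinearMap‖ * (‖Q‖ * ‖S' (m : X)‖) :=
        mul_le_mul_of_nonneg_left (ContinuousLinearMap.le_opNorm Q (S' (m : X)))
          (norm_nonneg eA.symm.toContinuousLinearMap)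
    _ = (‖eA.symm.toContinuousLinearMap‖ * ‖Q‖) * ‖S' (m : X)‖ := by ring
  -- R' = S'(M) is closed
  set f : M →L[ℂ] X := S'.comp M.subtypeL with hf_def
  have hfapp : ∀ m : M, f m = S' (m : X) := fun _ => rfl
  have hfanti : AntilipschitzWith ((‖eA.symm.toContinuousLinearMap‖ * ‖Q‖).toNNReal) f := by
    apply ContinuousLinearMap.antilipschitz_of_bound
    intro m
    refine le_trans (hbbM m) ?_
    rw [hfapp]
    exact mul_le_mul_of_nonneg_right (Real.le_coe_toNNReal _) (norm_nonneg (S' (m : X)))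
  have hR'c : IsClosed ((LinearMap.range f.toLinearMap : Submodule ℂ X) : Set X) := by
    have h7 := hfanti.isClosed_range f.uniformContinuous
    have h8 : ((LinearMap.range f.toLinearMap : Submodule ℂ X) : Set X) = Set.range f := by
      ext x; simp [LinearMap.mem_range]
    rw [h8]; exact h7
  -- N and R' = range f are complementary
  have hNR'disj : ∀ x, x ∈ N → x ∈ LinearMap.range f.toLinearMap → x = 0 := by
    rintro x hxN ⟨m, rfl⟩
    have h7 : A m = 0 := by
      rw [hAapp]
      have : Q (f m) = 0 := LinearMap.mem_ker.mp hxN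
      rw [hfapp] at this
      exact this
    have h8 : m = 0 := hAinj (by rw [h7, map_zero])
    change f m = 0
    rw [hfapp, h8]
    simp
  have hNR'top : ∀ x : X, ∃ n ∈ N, ∃ m : M, x = n + S' (m : X) := by
    intro x
    refine ⟨x - S' ((eA.symm (Q x) : M) : X), ?_, eA.symm (Q x), by abel⟩
    rw [LinearMap.mem_ker, map_sub]
    have h7 : Q (S' ((eA.symm (Q x) : M) : X)) = Q x := by rw [← hAapp, heAsymm']
    change Q x - Q (S' ((eA.symm (Q x) : M) : X)) = 0
    rw [h7, sub_self]
  have hcompl : IsCompl N (LinearMap.range f.toLinearMap) := by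
    rw [isCompl_iff]
    constructor
    · rw [Submodule.disjoint_def]
      exact hNR'disj
    · rw [codisjoint_iff]
      rw [Submodule.eq_top_iff']
      intro x
      obtain ⟨n, hn, m, hx⟩ := hNR'top x
      exact Submodule.mem_sup.mpr ⟨n, hn, S' (m : X), ⟨m, rfl⟩, hx.symm⟩
  set π : X →L[ℂ] N := Submodule.linearProjOfClosedCompl N (LinearMap.range f.toLinearMap) hcompl hNc hR'c
    with hπ_def
  set π' : X →L[ℂ] X := N.subtypeL.comp π with hπ'_def
  have hπN : ∀ n, n ∈ N → π' n = n := by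
    intro n hn
    show (π n : X) = n
    rw [hπ_def]
    rw [Submodule.coe_continuous_linearProjOfClosedCompl']
    exact congrArg Subtype.val (Submodule.linearProjOfIsCompl_apply_left hcompl ⟨n, hn⟩)
  have hπR' : ∀ x, x ∈ LinearMap.range f.toLinearMap → π' x = 0 := by
    intro x hx
    show (π x : X) = 0
    rw [hπ_def]
    rw [Submodule.coe_continuous_linearProjOfClosedCompl']
    rw [Submodule.linearProjOfIsCompl_apply_right' hcompl hx]
    rfl
  -- membership in the range of S' is detected by π'
  have hrange : ∀ x : X, x ∈ LinearMap.range S'.toLinearMap ↔ π' x ∈ LinearMap.range F.toLinearMap := by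
    intro x
    constructor
    · rintro ⟨y, rfl⟩
      obtain ⟨k, m, hkm⟩ := hdec y
      have hkey : S' y = f (m + eA.symm (Q (S' (k : X)))) + F k := by
        rw [← hkm, hfapp, hF, hψ]
        push_cast
        rw [map_add, map_add, map_sub]
        abel
      rw [show (S' : X →ₗ[ℂ] X) y = S' y from rfl, hkey, map_add, hπR' (f (m + eA.symm (Q (S' (k : X))))) (LinearMap.mem_range_self f.toLinearMap _), zero_add, hπN _ (hFN k)]
      exact LinearMap.mem_range_self F.toLinearMap k
    · rintro hx
      obtain ⟨k, hk⟩ := hx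
      obtain ⟨n, hn, m, hxd⟩ := hNR'top x
      have h7 : π' x = n := by
        rw [hxd, map_add, hπN n hn, hπR' (S' (m : X)) ⟨m, rfl⟩, add_zero]
      have h8 : x = S' (ψ k + (m : X)) := by
        rw [map_add]
        have : S' (ψ k) = F k := (hF k).symm
        rw [this, show F k = π' x from hk, h7, hxd]
      exact ⟨ψ k + (m : X), h8.symm⟩
  -- the range of S' is closed
  haveI hFfd : FiniteDimensional ℂ (LinearMap.range F.toLinearMap) := by
    have h7 : LinearMap.range F.toLinearMap = LinearMap.range (F : (LinearMap.ker S.toLinearMap) →ₗ[ℂ] X) := rfl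
    rw [h7]
    infer_instance
  have hrange_closed : IsClosed ((LinearMap.range S'.toLinearMap : Submodule ℂ X) : Set X) := by
    have h7 : ((LinearMap.range S'.toLinearMap : Submodule ℂ X) : Set X)
        = π' ⁻¹' ((LinearMap.range F.toLinearMap : Submodule ℂ X) : Set X) := by
      ext x
      exact hrange x
    rw [h7]
    exact (Submodule.closed_of_finiteDimensional (LinearMap.range F.toLinearMap)).preimage π'.continuous
  -- the kernel of S'
  have hker : LinearMap.ker S'.toLinearMap = Submodule.map (ψ : (LinearMap.ker S.toLinearMap) →ₗ[ℂ] X)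
      (LinearMap.ker F.toLinearMap) := by
    ext x
    constructor
    · intro hx
      have hx0 : S' x = 0 := LinearMap.mem_ker.mp hx
      obtain ⟨k, m, hkm⟩ := hdec x
      have h5 : A m = - (Q (S' (k : X))) := by
        have h6 : Q (S' (k : X)) + Q (S' (m : X)) = 0 := by
          rw [← map_add, ← map_add, hkm, hx0, map_zero]
        rw [hAapp]
        exact eq_neg_of_add_eq_zero_right h6
      have h6 : m = - eA.symm (Q (S' (k : X))) := by
        apply hAinj
        rw [map_neg, heAsymm', h5]
      have h7 : x = ψ k := by
        rw [hψ, ← hkm, h6]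
        push_cast
        abel
      have hFk0 : F k = 0 := by
        have h8 : F k = S' (ψ k) := hF k
        rw [h8, ← h7]
        exact hx0
      exact ⟨k, LinearMap.mem_ker.mpr hFk0, h7.symm⟩
    · rintro ⟨k, hk, rfl⟩
      exact LinearMap.mem_ker.mpr
        (show S' (ψ k) = 0 by rw [← hF]; exact hk)
  -- kernel finiteness and rank
  have ekk : (LinearMap.ker F.toLinearMap) ≃ₗ[ℂ] (Submodule.map (ψ : (LinearMap.ker S.toLinearMap) →ₗ[ℂ] X)
      (LinearMap.ker F.toLinearMap)) :=
    Submodule.equivMapOfInjective (ψ : (LinearMap.ker S.toLinearMap) →ₗ[ℂ] X) hψinj (LinearMap.ker F.toLinearMap)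
  haveI hkerS'fd : FiniteDimensional ℂ (LinearMap.ker S'.toLinearMap) := by
    rw [hker]
    exact ekk.finiteDimensional
  have hkerrank : Module.finrank ℂ (LinearMap.ker S'.toLinearMap) = Module.finrank ℂ (LinearMap.ker F.toLinearMap) := by
    rw [hker]
    exact ekk.finrank_eq.symm
  -- cokernel
  set φ : N →ₗ[ℂ] (X ⧸ LinearMap.range S'.toLinearMap) :=
    (LinearMap.range S'.toLinearMap).mkQ.comp N.subtype with hφ_def
  have hφapp : ∀ n : N, φ n = Submodule.Quotient.mk (n : X) := fun _ => rfl
  have hφsurj : Function.Surjective φ := by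
    intro z
    obtain ⟨x, rfl⟩ := (LinearMap.range S'.toLinearMap).mkQ_surjective z
    obtain ⟨n, hn, m, hxd⟩ := hNR'top x
    refine ⟨⟨n, hn⟩, ?_⟩
    rw [hφapp]
    show Submodule.Quotient.mk n = (LinearMap.range S'.toLinearMap).mkQ x
    rw [Submodule.mkQ_apply]
    rw [Submodule.Quotient.eq]
    refine ⟨-m, ?_⟩
    rw [hxd]
    show S' (-(m : X)) = n - (n + S' (m : X))
    rw [map_neg]
    abel
  have hφker : LinearMap.ker φ = Submodule.comap N.subtype (LinearMap.range F.toLinearMap) := by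
    ext n
    rw [LinearMap.mem_ker, Submodule.mem_comap, hφapp, Submodule.Quotient.mk_eq_zero]
    rw [hrange (n : X), hπN (n : X) n.2]
    rfl
  have hrangeFN : LinearMap.range F.toLinearMap ≤ N := by
    rintro x ⟨k, rfl⟩
    exact hFN k
  have eφ : ((N : Submodule ℂ X) ⧸ LinearMap.ker φ) ≃ₗ[ℂ] (X ⧸ LinearMap.range S'.toLinearMap) :=
    φ.quotKerEquivOfSurjective hφsurj
  haveI hcokfd : FiniteDimensional ℂ (X ⧸ LinearMap.range S'.toLinearMap) := eφ.finiteDimensional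
  have ecc : (LinearMap.ker φ) ≃ₗ[ℂ] (LinearMap.range F.toLinearMap) := by
    rw [hφker]
    exact Submodule.comapSubtypeEquivOfLe hrangeFN
  have h8 : Module.finrank ℂ (X ⧸ LinearMap.range S'.toLinearMap) + Module.finrank ℂ (LinearMap.ker φ)
      = Module.finrank ℂ N := by
    rw [← eφ.finrank_eq]
    exact Submodule.finrank_quotient_add_finrank (LinearMap.ker φ)
  have h9 : Module.finrank ℂ (LinearMap.ker φ) = Module.finrank ℂ (LinearMap.range F.toLinearMap) :=
    ecc.finrank_eq
  have h10 : Module.finrank ℂ (LinearMap.range F.toLinearMap) + Module.finrank ℂ (LinearMap.ker F.toLinearMap)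
      = Module.finrank ℂ (LinearMap.ker S.toLinearMap) :=
    LinearMap.finrank_range_add_finrank_ker (F : (LinearMap.ker S.toLinearMap) →ₗ[ℂ] X)
  have h11 : Module.finrank ℂ (X ⧸ LinearMap.range S.toLinearMap) = Module.finrank ℂ N := eN.finrank_eq
  refine ⟨⟨hkerS'fd, hrange_closed, hcokfd⟩, ?_⟩
  rw [hkerrank, h11]
  omega

lemma isUnit_op_of_not_mem_spectrum (T : X →L[ℂ] X) {l : ℂ} (hl : l ∉ spectrum ℂ T) :
    ∃ u : (X →L[ℂ] X)ˣ, (u : X →L[ℂ] X) = T - l • 1 := by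
  have h1 : IsUnit ((algebraMap ℂ (X →L[ℂ] X)) l - T) := spectrum.notMem_iff.mp hl
  have h2 : IsUnit (T - l • 1) := by
    have h3 : T - l • 1 = -((algebraMap ℂ (X →L[ℂ] X)) l - T) := by
      rw [Algebra.algebraMap_eq_smul_one, neg_sub]
    rw [h3]
    exact h1.neg
  exact h2
lemma bijective_of_unit {u : (X →L[ℂ] X)ˣ} {S : X →L[ℂ] X} (hu : (u : X →L[ℂ] X) = S) :
    Function.Bijective S := by
  constructor
  · intro x y hxy
    have h1 : ((u⁻¹ : (X →L[ℂ] X)ˣ) : X →L[ℂ] X) (S x)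
        = ((u⁻¹ : (X →L[ℂ] X)ˣ) : X →L[ℂ] X) (S y) := by rw [hxy]
    have h2 : ∀ z : X, ((u⁻¹ : (X →L[ℂ] X)ˣ) : X →L[ℂ] X) (S z) = z := by
      intro z
      rw [← hu]
      calc ((u⁻¹ : (X →L[ℂ] X)ˣ) : X →L[ℂ] X) ((u : X →L[ℂ] X) z)
          = (((u⁻¹ : (X →L[ℂ] X)ˣ) : X →L[ℂ] X) * (u : X →L[ℂ] X)) z := rfl
      _ = z := by rw [u.inv_mul]; rfl
    rwa [h2 x, h2 y] at h1
  · intro y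
    refine ⟨((u⁻¹ : (X →L[ℂ] X)ˣ) : X →L[ℂ] X) y, ?_⟩
    rw [← hu]
    calc (u : X →L[ℂ] X) (((u⁻¹ : (X →L[ℂ] X)ˣ) : X →L[ℂ] X) y)
        = ((u : X →L[ℂ] X) * ((u⁻¹ : (X →L[ℂ] X)ˣ) : X →L[ℂ] X)) y := rfl
    _ = y := by rw [u.mul_inv]; rfl

lemma isWeyl_of_not_mem_spectrum (T : X →L[ℂ] X) {l : ℂ} (hl : l ∉ spectrum ℂ T) :
    IsWeyl (T - l • 1) := by
  obtain ⟨u, hu⟩ := isUnit_op_of_not_mem_spectrum T hl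
  obtain ⟨hinj, hsurj⟩ := bijective_of_unit hu
  have hker : LinearMap.ker ((T - l • 1 : X →L[ℂ] X) : X →ₗ[ℂ] X) = ⊥ := LinearMap.ker_eq_bot.mpr hinj
  have hrange : LinearMap.range ((T - l • 1 : X →L[ℂ] X) : X →ₗ[ℂ] X) = ⊤ := LinearMap.range_eq_top.mpr hsurj
  haveI h1 : FiniteDimensional ℂ (LinearMap.ker ((T - l • 1 : X →L[ℂ] X) : X →ₗ[ℂ] X)) := by
    rw [hker]; infer_instance
  have h2 : IsClosed ((LinearMap.range ((T - l • 1 : X →L[ℂ] X) : X →ₗ[ℂ] X) : Submodule ℂ X) : Set X) := by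
    rw [hrange]
    exact isClosed_univ
  haveI h3 : Subsingleton (X ⧸ LinearMap.range ((T - l • 1 : X →L[ℂ] X) : X →ₗ[ℂ] X)) := by
    rw [hrange]
    exact Submodule.Quotient.subsingleton_iff.mpr rfl
  haveI h4 : FiniteDimensional ℂ (X ⧸ LinearMap.range ((T - l • 1 : X →L[ℂ] X) : X →ₗ[ℂ] X)) := by
    infer_instance
  refine ⟨⟨h1, h2, h4⟩, ?_⟩
  rw [hker, finrank_bot, Module.finrank_zero_of_subsingleton]

lemma mem_spectrum_of_not_surjective (T : X →L[ℂ] X) {l : ℂ}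
    (h : ¬ Function.Surjective ⇑(T - l • 1)) : l ∈ spectrum ℂ T := by
  by_contra hl
  obtain ⟨u, hu⟩ := isUnit_op_of_not_mem_spectrum T hl
  exact h (bijective_of_unit hu).2

lemma key_isWeyl (T : X →L[ℂ] X) (hyp : spectrum ℂ T \ sigma_e T = Ea0 T)
    {l : ℂ} (hl : l ∉ sigma_e T) : IsWeyl (T - l • 1) := by
  by_cases hsp : l ∈ spectrum ℂ T
  · have hEa : l ∈ Ea0 T := by rw [← hyp]; exact ⟨hsp, hl⟩
    have hFred : IsFredholm (T - l • 1) := not_not.mp hl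
    obtain ⟨ε, hε, hstab⟩ := fredholm_stability_s14 _ hFred
    obtain ⟨⟨hla, hnacc⟩, hker_ne, hkfd⟩ := hEa
    rw [accPt_iff_nhds] at hnacc
    push_neg at hnacc
    obtain ⟨U, hU, hU2⟩ := hnacc
    obtain ⟨δ, hδ, hball⟩ := Metric.mem_nhds_iff.mp hU
    set r : ℝ := min δ ε / 2 with hr_def
    have hr : 0 < r := by positivity
    have hrδ : r < δ := by
      have := min_le_left δ ε
      simp only [hr_def]
      linarith
    have hrε : r < ε := by
      have := min_le_right δ ε
      simp only [hr_def]
      linarith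
    set μ : ℂ := l + (r : ℂ) with hμ_def
    have hμl : μ ≠ l := by
      simp only [hμ_def]
      intro h
      have : (r : ℂ) = 0 := by
        have := sub_eq_zero.mpr h
        simpa using this
      rw [Complex.ofReal_eq_zero] at this
      linarith
    have hμU : μ ∈ U := by
      apply hball
      rw [Metric.mem_ball, hμ_def]
      simp only [dist_eq_norm, add_sub_cancel_left]
      rw [Complex.norm_real, Real.norm_eq_abs, abs_of_pos hr]
      exact hrδ
    have hμa : μ ∉ sigma_a T := fun h => hμl (hU2 μ ⟨hμU, h⟩)
    obtain ⟨c, hc, hbb⟩ := not_not.mp hμa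
    have hker0 : LinearMap.ker ((T - μ • 1 : X →L[ℂ] X) : X →ₗ[ℂ] X) = ⊥ := by
      rw [Submodule.eq_bot_iff]
      intro x hx
      have h1 : (T - μ • 1) x = 0 := hx
      have h2 := hbb x
      rw [h1, norm_zero] at h2
      have h3 : ‖x‖ ≤ 0 := by nlinarith [norm_nonneg x]
      exact norm_le_zero_iff.mp h3
    have hΔ : (T - μ • 1) - (T - l • 1) = (l - μ) • (1 : X →L[ℂ] X) := by
      rw [sub_smul]
      abel
    have hΔnorm : ‖(T - μ • 1) - (T - l • 1)‖ < ε := by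
      rw [hΔ]
      calc ‖(l - μ) • (1 : X →L[ℂ] X)‖ = ‖l - μ‖ * ‖(1 : X →L[ℂ] X)‖ :=
        norm_smul (l - μ) (1 : X →L[ℂ] X)
      _ ≤ ‖l - μ‖ * 1 := by
          have h1 : ‖(1 : X →L[ℂ] X)‖ ≤ 1 := ContinuousLinearMap.norm_id_le
          have h2 : (0:ℝ) ≤ ‖l - μ‖ := norm_nonneg (l - μ)
          nlinarith
      _ = ‖l - μ‖ := mul_one _
      _ < ε := by
          have : l - μ = -(r : ℂ) := by rw [hμ_def]; ring
          rw [this, norm_neg, Complex.norm_real, Real.norm_eq_abs, abs_of_pos hr]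
          exact hrε
    obtain ⟨hFred', hcount⟩ := hstab (T - μ • 1) hΔnorm
    rw [hker0, finrank_bot] at hcount
    refine ⟨hFred, ?_⟩
    by_cases hc0 : Module.finrank ℂ (X ⧸ LinearMap.range ((T - μ • 1 : X →L[ℂ] X) : X →ₗ[ℂ] X)) = 0
    · omega
    · exfalso
      have hnt : LinearMap.range ((T - μ • 1 : X →L[ℂ] X) : X →ₗ[ℂ] X) ≠ ⊤ := by
        intro h
        haveI : Subsingleton (X ⧸ LinearMap.range ((T - μ • 1 : X →L[ℂ] X) : X →ₗ[ℂ] X)) :=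
          Submodule.Quotient.subsingleton_iff.mpr h
        exact hc0 Module.finrank_zero_of_subsingleton
      have hnsurj : ¬ Function.Surjective ⇑(T - μ • 1) := fun h =>
        hnt (LinearMap.range_eq_top.mpr h)
      have hμsp : μ ∈ spectrum ℂ T := mem_spectrum_of_not_surjective T hnsurj
      have hμe : μ ∉ sigma_e T := not_not.mpr hFred'
      have hμEa : μ ∈ Ea0 T := by rw [← hyp]; exact ⟨hμsp, hμe⟩
      exact hμEa.2.1 hker0
  · exact isWeyl_of_not_mem_spectrum T hsp

/-- `T ∈ (aw_e)` iff `T ∈ (aw)` and `σ_e(T) = σ_w(T)`. -/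
theorem stmt14 (T : X →L[ℂ] X) :
    spectrum ℂ T \ sigma_e T = Ea0 T ↔
      spectrum ℂ T \ sigma_w T = Ea0 T ∧ sigma_e T = sigma_w T := by
  constructor
  · intro h
    have hew : sigma_e T = sigma_w T := by
      ext l
      constructor
      · intro hle hW
        exact hle hW.1
      · intro hlw
        by_contra hle
        exact hlw (key_isWeyl T h hle)
    exact ⟨by rw [← hew]; exact h, hew⟩
  · rintro ⟨h1, h2⟩
    rw [h2]
    exact h1
end
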